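/- arXiv:0709.3703 — 4 statements merged into one kernel-verified Lean document; each statement's English description precedes it below -/
import Mathlib

section
/- For every natural number n and every complex number u, the n-th derivative of the entire function S satisfies |S⁽ⁿ⁾(u)| ≤ 2^{n+1}/(1+|u|) · e^{|Im u|}. -/
open Complex

/-- The entire extension of `z ↦ sin z / z`. -/
noncomputable def sincC (z : ℂ) : ℂ := if z = 0 then 1 else Complex.sin z / z

namespace SincAux

open intervalIntegral Metric

/-- `G n z = (1/2) ∫_{-1}^1 (tI)^n e^{z·it} dt`; this is the `n`-th derivative of `sincC`. -/
noncomputable def G (n : ℕ) (z : ℂ) : ℂ :=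
  (1/2 : ℂ) * ∫ t in (-1:ℝ)..1, ((t:ℂ) * I)^n * Complex.exp (z * (I * t))

lemma contF (n : ℕ) (x : ℂ) :
    Continuous (fun t : ℝ => ((t:ℂ) * I)^n * Complex.exp (x * (I * t))) := by
  fun_prop

lemma norm_exp_le (u : ℂ) (t : ℝ) (ht : |t| ≤ 1) :
    ‖Complex.exp (u * (I * t))‖ ≤ Real.exp |u.im| := by
  rw [Complex.norm_exp]
  apply Real.exp_le_exp.2
  have hre : (u * (I * (t:ℂ))).re = -u.im * t := by
    simp [Complex.mul_re, Complex.mul_im]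
  rw [hre]
  calc -u.im * t ≤ |(-u.im) * t| := le_abs_self _
    _ = |u.im| * |t| := by rw [abs_mul, abs_neg]
    _ ≤ |u.im| * 1 := by gcongr
    _ = |u.im| := mul_one _

lemma normF_le (n : ℕ) (u : ℂ) (t : ℝ) (ht : |t| ≤ 1) :
    ‖((t:ℂ) * I)^n * Complex.exp (u * (I * t))‖ ≤ Real.exp |u.im| := by
  calc ‖((t:ℂ) * I)^n * Complex.exp (u * (I * t))‖
      = |t|^n * ‖Complex.exp (u * (I * t))‖ := by
        simp [norm_mul, norm_pow, map_mul, Complex.norm_real, Complex.norm_I]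
    _ ≤ 1^n * Real.exp |u.im| := by
        apply mul_le_mul (pow_le_pow_left₀ (abs_nonneg t) ht _) (norm_exp_le u t ht)
          (norm_nonneg _) (by norm_num)
    _ = Real.exp |u.im| := by norm_num

lemma mem_uIoc_abs {t : ℝ} (ht : t ∈ Set.uIoc (-1:ℝ) 1) : |t| ≤ 1 := by
  rw [Set.uIoc_of_le (by norm_num : (-1:ℝ) ≤ 1)] at ht
  rw [abs_le]; exact ⟨le_of_lt ht.1, ht.2⟩

lemma G_zero : G 0 = sincC := by
  funext z
  unfold G sincC
  simp only [pow_zero, one_mul]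
  by_cases hz : z = 0
  · subst hz
    simp only [zero_mul, Complex.exp_zero, intervalIntegral.integral_const]
    norm_num
  · rw [if_neg hz]
    have h1 : ∀ t : ℝ, z * (I * t) = (z * I) * t := fun t => by ring
    simp_rw [h1]
    rw [integral_exp_mul_complex (by simp [hz, Complex.I_ne_zero] : z * I ≠ 0)]
    have e1 : z * I * (1:ℝ) = z * I := by push_cast; ring
    have e2 : z * I * ((-1:ℝ):ℂ) = (-z) * I := by push_cast; ring
    rw [e1, e2, Complex.exp_mul_I, Complex.exp_mul_I, Complex.cos_neg, Complex.sin_neg]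
    field_simp
    ring

lemma G_hasDerivAt (n : ℕ) (z : ℂ) : HasDerivAt (G n) (G (n+1) z) z := by
  unfold G
  apply HasDerivAt.const_mul
  have key := intervalIntegral.hasDerivAt_integral_of_dominated_loc_of_deriv_le
      (μ := MeasureTheory.volume) (a := (-1:ℝ)) (b := 1)
      (F := fun (x : ℂ) (t : ℝ) => ((t:ℂ) * I)^n * Complex.exp (x * (I * t)))
      (F' := fun (x : ℂ) (t : ℝ) => ((t:ℂ) * I)^(n+1) * Complex.exp (x * (I * t)))
      (x₀ := z) (bound := fun _ => Real.exp (‖z‖ + 1)) (s := ball z 1) (ball_mem_nhds z one_pos)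
      ?_ ?_ ?_ ?_ ?_ ?_
  · exact key.2
  · filter_upwards with x using (contF n x).aestronglyMeasurable
  · exact (contF n z).intervalIntegrable _ _
  · exact (contF (n+1) z).aestronglyMeasurable
  · filter_upwards with t ht x hx
    have ht1 : |t| ≤ 1 := mem_uIoc_abs ht
    have hre : (x * (I * (t:ℂ))).re ≤ ‖z‖ + 1 := by
      calc (x * (I * (t:ℂ))).re ≤ ‖x * (I * (t:ℂ))‖ := Complex.re_le_norm _
        _ = ‖x‖ * (‖I‖ * |t|) := by simp [map_mul, Complex.norm_real]
        _ ≤ (‖z‖ + 1) * (1 * 1) := by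
            apply mul_le_mul _ _ (by positivity) (by positivity)
            · have : ‖x‖ ≤ ‖z‖ + 1 := by
                calc ‖x‖ = ‖z + (x - z)‖ := by ring_nf
                  _ ≤ ‖z‖ + ‖x - z‖ := norm_add_le _ _
                  _ ≤ ‖z‖ + 1 := by linarith [(mem_ball_iff_norm.1 hx).le]
              simpa using this
            · simp [Complex.norm_I, ht1]
        _ = ‖z‖ + 1 := by ring
    calc ‖((t:ℂ) * I)^(n+1) * Complex.exp (x * (I * t))‖
        = |t|^(n+1) * Real.exp ((x * (I * (t:ℂ))).re) := by
          simp [norm_mul, norm_pow, map_mul, Complex.norm_real,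
            Complex.norm_I, Complex.norm_exp]
      _ ≤ 1^(n+1) * Real.exp (‖z‖ + 1) := by
          apply mul_le_mul (pow_le_pow_left₀ (abs_nonneg t) ht1 _)
            (Real.exp_le_exp.2 hre) (Real.exp_nonneg _) (by norm_num)
      _ = Real.exp (‖z‖ + 1) := by norm_num
  · exact intervalIntegrable_const
  · filter_upwards with t ht x hx
    have := ((hasDerivAt_id x).mul_const (I * (t:ℂ))).cexp
    have h2 := this.const_mul (((t:ℂ) * I)^n)
    refine h2.congr_deriv ?_
    simp only [id_eq]
    ring

lemma G_norm_le (n : ℕ) (u : ℂ) : ‖G n u‖ ≤ Real.exp |u.im| := by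
  unfold G
  rw [norm_mul]
  have h := intervalIntegral.norm_integral_le_of_norm_le_const
      (C := Real.exp |u.im|)
      (f := fun t : ℝ => ((t:ℂ) * I)^n * Complex.exp (u * (I * t)))
      (fun t ht => normF_le n u t (mem_uIoc_abs ht))
  have h12 : ‖(1/2 : ℂ)‖ = 1/2 := by norm_num
  rw [h12]
  calc 1/2 * ‖∫ t in (-1:ℝ)..1, ((t:ℂ) * I)^n * Complex.exp (u * (I * t))‖
      ≤ 1/2 * (Real.exp |u.im| * |(1:ℝ) - (-1)|) := by
        have h2 : (0:ℝ) ≤ 1/2 := by norm_num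
        exact mul_le_mul_of_nonneg_left h h2
    _ = Real.exp |u.im| := by rw [show |(1:ℝ) - (-1)| = 2 by norm_num]; ring

lemma uG_norm_le (n : ℕ) (u : ℂ) : ‖u * G n u‖ ≤ (n+1) * Real.exp |u.im| := by
  by_cases hu : u = 0
  · subst hu; simp; positivity
  set c : ℂ := u * I with hc
  have hc0 : c ≠ 0 := by simp [hc, hu, Complex.I_ne_zero]
  have hexp : ∀ t : ℝ, |t| ≤ 1 → ‖Complex.exp (c * t)‖ ≤ Real.exp |u.im| := by
    intro t ht
    have : c * (t:ℂ) = u * (I * t) := by rw [hc]; ring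
    rw [this]; exact norm_exp_le u t ht
  have hint : ∀ t : ℝ, ((t:ℂ) * I)^n * Complex.exp (u * (I * t))
      = I^n * ((t:ℂ)^n * Complex.exp (c * t)) := by
    intro t; rw [hc, mul_pow]; ring_nf
  have hG : G n u = (1/2 : ℂ) * (I^n * ∫ t in (-1:ℝ)..1, (t:ℂ)^n * Complex.exp (c * t)) := by
    unfold G
    simp_rw [hint]
    rw [intervalIntegral.integral_const_mul]
  have hpow : ∀ t : ℝ, HasDerivAt (fun s : ℝ => ((s:ℂ))^n) ((n:ℂ) * (t:ℂ)^(n-1)) t :=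
    fun t => (hasDerivAt_pow n (t:ℂ)).comp_ofReal
  have hexp' : ∀ t : ℝ, HasDerivAt (fun s : ℝ => Complex.exp (c * s) / c)
      (Complex.exp (c * t)) t := by
    intro t
    have h1 : HasDerivAt (fun w : ℂ => Complex.exp (c * w) / c) (Complex.exp (c * t)) (t:ℂ) := by
      have := (((hasDerivAt_id (t:ℂ)).const_mul c).cexp).div_const c
      simpa [mul_div_cancel_right₀ _ hc0] using this
    exact h1.comp_ofReal
  have parts := intervalIntegral.integral_mul_deriv_eq_deriv_mul
      (a := (-1:ℝ)) (b := 1)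
      (u := fun t : ℝ => ((t:ℂ))^n) (u' := fun t : ℝ => (n:ℂ) * (t:ℂ)^(n-1))
      (v := fun t : ℝ => Complex.exp (c * t) / c) (v' := fun t : ℝ => Complex.exp (c * t))
      (fun t _ => hpow t) (fun t _ => hexp' t)
      (by apply Continuous.intervalIntegrable; fun_prop)
      (by apply Continuous.intervalIntegrable; fun_prop)
  have hrem : ‖∫ t in (-1:ℝ)..1, (n:ℂ) * (t:ℂ)^(n-1) * (Complex.exp (c * t) / c)‖
      ≤ n * Real.exp |u.im| / ‖c‖ * 2 := by
    have := intervalIntegral.norm_integral_le_of_norm_le_const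
      (a := (-1:ℝ)) (b := 1) (C := n * Real.exp |u.im| / ‖c‖)
      (f := fun t : ℝ => (n:ℂ) * (t:ℂ)^(n-1) * (Complex.exp (c * t) / c)) ?_
    · calc ‖∫ t in (-1:ℝ)..1, (n:ℂ) * (t:ℂ)^(n-1) * (Complex.exp (c * t) / c)‖
          ≤ n * Real.exp |u.im| / ‖c‖ * |(1:ℝ) - (-1)| := this
        _ = n * Real.exp |u.im| / ‖c‖ * 2 := by rw [show |(1:ℝ) - (-1)| = 2 by norm_num]
    · intro t ht
      have ht1 := mem_uIoc_abs ht
      calc ‖(n:ℂ) * (t:ℂ)^(n-1) * (Complex.exp (c * t) / c)‖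
          = n * |t|^(n-1) * (‖Complex.exp (c * t)‖ / ‖c‖) := by
            simp [norm_mul, norm_pow, norm_div, Complex.norm_natCast, Complex.norm_real,
              Real.norm_eq_abs]
        _ ≤ n * 1^(n-1) * (Real.exp |u.im| / ‖c‖) := by
            have h1 : |t|^(n-1) ≤ 1^(n-1) := pow_le_pow_left₀ (abs_nonneg t) ht1 _
            have h2 : ‖Complex.exp (c * t)‖ / ‖c‖ ≤ Real.exp |u.im| / ‖c‖ := by
              gcongr
              exact hexp t ht1
            exact mul_le_mul (mul_le_mul le_rfl h1 (pow_nonneg (abs_nonneg t) _)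
              (Nat.cast_nonneg n)) h2 (div_nonneg (norm_nonneg _) (norm_nonneg _)) (by positivity)
        _ = n * Real.exp |u.im| / ‖c‖ := by ring
  rw [hG]
  have hnorm : ‖u * ((1/2 : ℂ) * (I^n * ∫ t in (-1:ℝ)..1, (t:ℂ)^n * Complex.exp (c * t)))‖
      = 1/2 * (‖u‖ * ‖∫ t in (-1:ℝ)..1, (t:ℂ)^n * Complex.exp (c * t)‖) := by
    simp [norm_mul, norm_pow, Complex.norm_I]
    ring
  rw [hnorm, parts]
  have hcu : ‖c‖ = ‖u‖ := by simp [hc]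
  have hb1 : ‖((1:ℝ):ℂ)^n * (Complex.exp (c * (1:ℝ)) / c)‖ ≤ Real.exp |u.im| / ‖u‖ := by
    rw [norm_mul, norm_div, norm_pow]
    have h1 : ‖((1:ℝ):ℂ)‖ = 1 := by norm_num
    rw [h1, one_pow, one_mul, hcu]
    gcongr
    exact hexp 1 (by norm_num)
  have hb2 : ‖(((-1:ℝ)):ℂ)^n * (Complex.exp (c * (-1:ℝ)) / c)‖ ≤ Real.exp |u.im| / ‖u‖ := by
    rw [norm_mul, norm_div, norm_pow]
    have h1 : ‖((-1:ℝ):ℂ)‖ = 1 := by norm_num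
    rw [h1, one_pow, one_mul, hcu]
    gcongr
    exact hexp (-1) (by norm_num)
  have hu' : (0:ℝ) < ‖u‖ := norm_pos_iff.2 hu
  have hne : ‖u‖ ≠ 0 := hu'.ne'
  have tri : ∀ A B C : ℂ, ‖A - B - C‖ ≤ ‖A‖ + ‖B‖ + ‖C‖ := fun A B C =>
    (norm_sub_le _ _).trans (by gcongr; exact norm_sub_le _ _)
  rw [hcu] at hrem
  refine le_trans (mul_le_mul_of_nonneg_left (mul_le_mul_of_nonneg_left
    ((tri _ _ _).trans (add_le_add (add_le_add hb1 hb2) hrem)) (norm_nonneg u))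
    (by norm_num : (0:ℝ) ≤ 1/2)) (le_of_eq ?_)
  have habs : ‖u‖ ≠ 0 := hne
  field_simp [habs]
  ring

lemma iteratedDeriv_sincC (n : ℕ) : iteratedDeriv n sincC = G n := by
  induction n with
  | zero => simpa [iteratedDeriv_zero] using G_zero.symm
  | succ n ih =>
    rw [iteratedDeriv_succ, ih]
    funext z
    exact (G_hasDerivAt n z).deriv

end SincAux

theorem stmt0 (n : ℕ) (u : ℂ) :
    ‖iteratedDeriv n sincC u‖ ≤ 2 ^ (n + 1) / (1 + ‖u‖) * Real.exp |u.im| := by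
  have hpos : (0:ℝ) < 1 + ‖u‖ := by positivity
  rw [SincAux.iteratedDeriv_sincC, div_mul_eq_mul_div, le_div_iff₀ hpos]
  have h1 := SincAux.G_norm_le n u
  have h2 := SincAux.uG_norm_le n u
  have hn : ((n:ℝ) + 2) ≤ 2^(n+1) := by
    have hlt : n < 2^n := Nat.lt_two_pow_self
    have h : (n + 2 : ℕ) ≤ 2^(n+1) := by
      calc n + 2 ≤ 2*(n+1) := by omega
        _ ≤ 2 * 2^n := by omega
        _ = 2^(n+1) := by rw [pow_succ]; ring
    exact_mod_cast h
  calc ‖SincAux.G n u‖ * (1 + ‖u‖) = ‖SincAux.G n u‖ + ‖u‖ * ‖SincAux.G n u‖ := by ring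
    _ = ‖SincAux.G n u‖ + ‖u * SincAux.G n u‖ := by rw [norm_mul]
    _ ≤ Real.exp |u.im| + (n+1) * Real.exp |u.im| := add_le_add h1 h2
    _ = ((n:ℝ) + 2) * Real.exp |u.im| := by ring
    _ ≤ 2^(n+1) * Real.exp |u.im| := mul_le_mul_of_nonneg_right hn (Real.exp_nonneg _)
end

section
/- For every natural number n there exists a constant C(n) > 0 such that for all complex ω ≠ 0 and all reals v ≥ u > 0, the n-th derivative in ω of the entire function ω ↦ (u−v)·S(ω(u−v)) satisfies |∂_ω^n[(u−v)·S(ω(u−v))]| ≤ C(n)·v^{n+1}/(1+|ωv|) · e^{v·|Im ω| + u·Im ω}. -/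
open Complex

lemma norm_csin_le (z : ℂ) : ‖Complex.sin z‖ ≤ Real.exp |z.im| := by
  have h : Complex.sin z = (Complex.exp (-z * I) - Complex.exp (z * I)) * I / 2 := rfl
  rw [h]
  have h1 : ‖Complex.exp (-z * I)‖ = Real.exp z.im := by
    simp [Complex.norm_exp]
  have h2 : ‖Complex.exp (z * I)‖ = Real.exp (-z.im) := by
    simp [Complex.norm_exp]
  calc ‖(Complex.exp (-z * I) - Complex.exp (z * I)) * I / 2‖
      = ‖Complex.exp (-z * I) - Complex.exp (z * I)‖ / 2 := by
        simp [norm_div, norm_mul]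
    _ ≤ (Real.exp z.im + Real.exp (-z.im)) / 2 := by
        rw [← h1, ← h2]
        gcongr
        exact norm_sub_le _ _
    _ ≤ Real.exp |z.im| := by
        have := le_abs_self z.im
        have := neg_abs_le z.im
        have e1 : Real.exp z.im ≤ Real.exp |z.im| := Real.exp_le_exp.2 (le_abs_self _)
        have e2 : Real.exp (-z.im) ≤ Real.exp |z.im| := Real.exp_le_exp.2 (by linarith)
        linarith

lemma norm_ccos_le (z : ℂ) : ‖Complex.cos z‖ ≤ Real.exp |z.im| := by
  have h : Complex.cos z = (Complex.exp (z * I) + Complex.exp (-z * I)) / 2 := rfl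
  rw [h]
  have h1 : ‖Complex.exp (-z * I)‖ = Real.exp z.im := by
    simp [Complex.norm_exp]
  have h2 : ‖Complex.exp (z * I)‖ = Real.exp (-z.im) := by
    simp [Complex.norm_exp]
  calc ‖(Complex.exp (z * I) + Complex.exp (-z * I)) / 2‖
      = ‖Complex.exp (z * I) + Complex.exp (-z * I)‖ / 2 := by simp [norm_div]
    _ ≤ (Real.exp (-z.im) + Real.exp z.im) / 2 := by
        rw [← h1, ← h2]; gcongr; exact norm_add_le _ _
    _ ≤ Real.exp |z.im| := by
        have e1 : Real.exp z.im ≤ Real.exp |z.im| := Real.exp_le_exp.2 (le_abs_self _)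
        have e2 : Real.exp (-z.im) ≤ Real.exp |z.im| := Real.exp_le_exp.2 (by
          have := neg_abs_le z.im; linarith)
        linarith

lemma norm_csin_le_three_mul (z : ℂ) (hz : ‖z‖ ≤ 1) : ‖Complex.sin z‖ ≤ 3 * ‖z‖ := by
  have key := Convex.norm_image_sub_le_of_norm_deriv_le (C := 3)
    (f := Complex.sin) (s := Metric.closedBall (0:ℂ) 1)
    (fun x _ => Complex.differentiable_sin x)
    (fun x hx => by
      rw [Complex.deriv_sin]
      refine (norm_ccos_le x).trans ?_
      have him : |x.im| ≤ 1 := by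
        have := Complex.abs_im_le_norm x
        have : |x.im| ≤ ‖x‖ := this
        have hxb : ‖x‖ ≤ 1 := by simpa using Metric.mem_closedBall.1 hx
        linarith
      calc Real.exp |x.im| ≤ Real.exp 1 := Real.exp_le_exp.2 him
        _ ≤ 3 := by
          have := Real.exp_one_lt_d9
          linarith)
    (convex_closedBall _ _)
    (Metric.mem_closedBall_self zero_le_one)
    (by simpa using hz)
  simpa using key

lemma sincC_eq_dslope : sincC = dslope Complex.sin 0 := by
  funext z
  by_cases hz : z = 0
  · subst hz
    simp [sincC, dslope, Complex.deriv_sin]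
  · simp [sincC, dslope, Function.update_of_ne hz, slope, hz, div_eq_inv_mul, smul_eq_mul]

lemma differentiable_sincC : Differentiable ℂ sincC := by
  intro z
  by_cases hz : z = 0
  · subst hz
    rw [sincC_eq_dslope]
    obtain ⟨p, hp⟩ := Complex.differentiable_sin.analyticAt (0:ℂ)
    exact (hp.has_fpower_series_dslope_fslope).analyticAt.differentiableAt
  · have hev : (fun w => Complex.sin w / w) =ᶠ[nhds z] sincC := by
      filter_upwards [isOpen_compl_singleton.eventually_mem (by simpa using hz : z ∈ ({(0:ℂ)}ᶜ : Set ℂ))] with w hw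
      simp [sincC, (by simpa using hw : w ≠ 0)]
    exact (((Complex.differentiable_sin z).div (differentiableAt_id) hz)).congr_of_eventuallyEq hev.symm

lemma norm_sincC_le (z : ℂ) : ‖sincC z‖ ≤ 3 * Real.exp |z.im| := by
  have hexp : (1:ℝ) ≤ Real.exp |z.im| := Real.one_le_exp (abs_nonneg _)
  by_cases hz : z = 0
  · subst hz
    have : sincC 0 = 1 := if_pos rfl
    rw [this, norm_one]
    linarith
  · rw [show sincC z = Complex.sin z / z from if_neg hz, norm_div]
    rcases le_or_gt ‖z‖ 1 with h1 | h1
    · have := norm_csin_le_three_mul z h1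
      have hz0 : 0 < ‖z‖ := norm_pos_iff.2 hz
      calc ‖Complex.sin z‖ / ‖z‖ ≤ 3 * ‖z‖ / ‖z‖ := by gcongr
        _ = 3 := by
          rw [mul_div_assoc, div_self (ne_of_gt hz0), mul_one]
        _ ≤ 3 * Real.exp |z.im| := by nlinarith
    · have := norm_csin_le z
      calc ‖Complex.sin z‖ / ‖z‖ ≤ ‖Complex.sin z‖ := div_le_self (norm_nonneg _) h1.le
        _ ≤ Real.exp |z.im| := this
        _ ≤ 3 * Real.exp |z.im| := by linarith

lemma cauchy_est {f : ℂ → ℂ} (hf : Differentiable ℂ f) (c : ℂ) {R M : ℝ} (hR : 0 < R)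
    (hb : ∀ z ∈ Metric.sphere c R, ‖f z‖ ≤ M) (n : ℕ) :
    ‖iteratedDeriv n f c‖ ≤ n.factorial * M / R ^ n := by
  have hmem : (c + (R:ℂ)) ∈ Metric.sphere c R := by
    simp [Complex.dist_eq, abs_of_pos hR]
  have hM : 0 ≤ M := le_trans (norm_nonneg _) (hb _ hmem)
  set R' : NNReal := ⟨R, hR.le⟩ with hR'
  have hps : HasFPowerSeriesOnBall f (cauchyPowerSeries f c R') c ⊤ :=
    hf.hasFPowerSeriesOnBall c (by exact_mod_cast hR)
  have key := hps.factorial_smul (y := (1:ℂ)) n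
  have h1 : iteratedDeriv n f c = iteratedFDeriv ℂ n f c (fun _ => (1:ℂ)) :=
    iteratedDeriv_eq_iteratedFDeriv
  rw [h1, ← key]
  have hnorm : ‖(n.factorial : ℕ) • (cauchyPowerSeries f c R' n) (fun _ => (1:ℂ))‖
      = (n.factorial : ℝ) * ‖(cauchyPowerSeries f c R' n) (fun _ => (1:ℂ))‖ := by
    rw [← Nat.cast_smul_eq_nsmul ℝ, norm_smul]
    simp
  rw [hnorm]
  have hop : ‖(cauchyPowerSeries f c R' n) (fun _ => (1:ℂ))‖ ≤ ‖cauchyPowerSeries f c R' n‖ := by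
    have := (cauchyPowerSeries f c R' n).le_opNorm (fun _ => (1:ℂ))
    simpa using this
  have hint : (∫ θ : ℝ in (0)..2 * Real.pi, ‖f (circleMap c R' θ)‖) ≤ 2 * Real.pi * M := by
    have hcont : Continuous fun θ : ℝ => ‖f (circleMap c R' θ)‖ :=
      (hf.continuous.comp (continuous_circleMap c R')).norm
    calc (∫ θ : ℝ in (0)..2 * Real.pi, ‖f (circleMap c R' θ)‖)
        ≤ ∫ _ : ℝ in (0)..2 * Real.pi, M := by
          apply intervalIntegral.integral_mono_on Real.two_pi_pos.le
            (hcont.intervalIntegrable _ _) (intervalIntegrable_const)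
          intro θ _
          exact hb _ (circleMap_mem_sphere c (by exact_mod_cast hR.le) θ)
      _ = 2 * Real.pi * M := by simp [mul_comm]
  have hcps := norm_cauchyPowerSeries_le f c R' n
  have habs : |(R' : ℝ)| = R := by
    rw [hR']; exact abs_of_pos hR
  have hbound : ‖cauchyPowerSeries f c R' n‖ ≤ M / R ^ n := by
    refine hcps.trans ?_
    rw [habs]
    have h2pi : (0:ℝ) < (2 * Real.pi)⁻¹ := by positivity
    have : (2 * Real.pi)⁻¹ * (∫ θ : ℝ in (0)..2 * Real.pi, ‖f (circleMap c R' θ)‖) ≤ M := by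
      calc (2 * Real.pi)⁻¹ * (∫ θ : ℝ in (0)..2 * Real.pi, ‖f (circleMap c R' θ)‖)
          ≤ (2 * Real.pi)⁻¹ * (2 * Real.pi * M) := by gcongr
        _ = M := by field_simp
    calc (2 * Real.pi)⁻¹ * (∫ θ : ℝ in (0)..2 * Real.pi, ‖f (circleMap c (R':ℝ) θ)‖) * (R⁻¹) ^ n
        ≤ M * (R⁻¹) ^ n := by gcongr
      _ = M / R ^ n := by rw [inv_pow]; rw [div_eq_mul_inv]
  calc (n.factorial : ℝ) * ‖(cauchyPowerSeries f c R' n) (fun _ => (1:ℂ))‖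
      ≤ (n.factorial : ℝ) * (M / R ^ n) := by
        exact mul_le_mul_of_nonneg_left (hop.trans hbound) (by positivity)
    _ = n.factorial * M / R ^ n := by ring

lemma iteratedDeriv_cmul {i : ℕ} {f : ℂ → ℂ} (hf : ContDiff ℂ (i:ℕ∞) f) (c : ℂ) (x : ℂ) :
    iteratedDeriv i (fun w => c * f w) x = c * iteratedDeriv i f x := by
  simp only [iteratedDeriv_eq_iteratedFDeriv]
  rw [show (fun w => c * f w) = fun w => c • f w from rfl,
    iteratedFDeriv_const_smul_apply' hf.contDiffAt]
  rfl

lemma iter_sin_bound (a : ℝ) (i : ℕ) (ω : ℂ) :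
    ‖iteratedDeriv i (fun w : ℂ => Complex.sin (w * (a:ℂ))) ω‖
      ≤ |a| ^ i * Real.exp (|a| * |ω.im|) := by
  have hrw : (fun w : ℂ => Complex.sin (w * (a:ℂ)))
      = fun w : ℂ => (Complex.I/2) * Complex.exp ((-(a:ℂ)*Complex.I) * w)
        + (-(Complex.I/2)) * Complex.exp (((a:ℂ)*Complex.I) * w) := by
    funext w
    have h : Complex.sin (w * (a:ℂ))
        = (Complex.exp (-(w * (a:ℂ)) * Complex.I) - Complex.exp ((w * (a:ℂ)) * Complex.I))
          * Complex.I / 2 := rfl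
    rw [h, show -(w * (a:ℂ)) * Complex.I = (-(a:ℂ)*Complex.I) * w by ring,
      show (w * (a:ℂ)) * Complex.I = ((a:ℂ)*Complex.I) * w by ring]
    ring
  have hc1 : ContDiff ℂ (i:ℕ∞) fun w : ℂ => (Complex.I/2) * Complex.exp ((-(a:ℂ)*Complex.I) * w) :=
    contDiff_const.mul ((contDiff_const.mul contDiff_id).cexp)
  have hc2 : ContDiff ℂ (i:ℕ∞) fun w : ℂ => (-(Complex.I/2)) * Complex.exp (((a:ℂ)*Complex.I) * w) :=
    contDiff_const.mul ((contDiff_const.mul contDiff_id).cexp)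
  have hce1 : ContDiff ℂ (i:ℕ∞) (fun w : ℂ => Complex.exp ((-(a:ℂ)*Complex.I) * w)) :=
    (contDiff_const.mul contDiff_id).cexp
  have hce2 : ContDiff ℂ (i:ℕ∞) (fun w : ℂ => Complex.exp (((a:ℂ)*Complex.I) * w)) :=
    (contDiff_const.mul contDiff_id).cexp
  have hadd : iteratedDeriv i (fun w : ℂ => (Complex.I/2) * Complex.exp ((-(a:ℂ)*Complex.I) * w)
        + (-(Complex.I/2)) * Complex.exp (((a:ℂ)*Complex.I) * w)) ω
      = iteratedDeriv i (fun w : ℂ => (Complex.I/2) * Complex.exp ((-(a:ℂ)*Complex.I) * w)) ω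
        + iteratedDeriv i (fun w : ℂ => (-(Complex.I/2)) * Complex.exp (((a:ℂ)*Complex.I) * w)) ω := by
    simp only [iteratedDeriv_eq_iteratedFDeriv]
    rw [show (fun w : ℂ => (Complex.I/2) * Complex.exp ((-(a:ℂ)*Complex.I) * w)
        + (-(Complex.I/2)) * Complex.exp (((a:ℂ)*Complex.I) * w))
      = (fun w : ℂ => (Complex.I/2) * Complex.exp ((-(a:ℂ)*Complex.I) * w))
        + (fun w : ℂ => (-(Complex.I/2)) * Complex.exp (((a:ℂ)*Complex.I) * w)) from rfl]
    rw [iteratedFDeriv_add_apply hc1.contDiffAt hc2.contDiffAt]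
    rfl
  have he1 : iteratedDeriv i (fun w : ℂ => (Complex.I/2) * Complex.exp ((-(a:ℂ)*Complex.I) * w)) ω
      = (Complex.I/2) * ((-(a:ℂ)*Complex.I)^i * Complex.exp ((-(a:ℂ)*Complex.I) * ω)) := by
    rw [iteratedDeriv_cmul hce1, iteratedDeriv_cexp_const_mul]
  have he2 : iteratedDeriv i (fun w : ℂ => (-(Complex.I/2)) * Complex.exp (((a:ℂ)*Complex.I) * w)) ω
      = (-(Complex.I/2)) * (((a:ℂ)*Complex.I)^i * Complex.exp (((a:ℂ)*Complex.I) * ω)) := by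
    rw [iteratedDeriv_cmul hce2, iteratedDeriv_cexp_const_mul]
  rw [hrw, hadd, he1, he2]
  have hnI : ‖(Complex.I/2 : ℂ)‖ = 1/2 := by
    simp [norm_div]
  have hnorm1 : ‖((-(a:ℂ)*Complex.I))^i‖ = |a| ^ i := by
    rw [norm_pow]
    simp [map_mul]
  have hnorm2 : ‖(((a:ℂ)*Complex.I))^i‖ = |a| ^ i := by
    rw [norm_pow]
    simp [map_mul]
  have hre1 : ((-(a:ℂ)*Complex.I) * ω).re = a * ω.im := by
    simp [Complex.mul_re, Complex.mul_im]
  have hre2 : (((a:ℂ)*Complex.I) * ω).re = -(a * ω.im) := by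
    simp [Complex.mul_re, Complex.mul_im]
  have hexp1 : ‖Complex.exp ((-(a:ℂ)*Complex.I) * ω)‖ ≤ Real.exp (|a| * |ω.im|) := by
    rw [Complex.norm_exp, hre1]
    apply Real.exp_le_exp.2
    calc a * ω.im ≤ |a * ω.im| := le_abs_self _
      _ = |a| * |ω.im| := abs_mul _ _
  have hexp2 : ‖Complex.exp (((a:ℂ)*Complex.I) * ω)‖ ≤ Real.exp (|a| * |ω.im|) := by
    rw [Complex.norm_exp, hre2]
    apply Real.exp_le_exp.2
    calc -(a * ω.im) ≤ |a * ω.im| := neg_le_abs _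
      _ = |a| * |ω.im| := abs_mul _ _
  calc ‖(Complex.I/2) * ((-(a:ℂ)*Complex.I)^i * Complex.exp ((-(a:ℂ)*Complex.I) * ω))
        + (-(Complex.I/2)) * (((a:ℂ)*Complex.I)^i * Complex.exp (((a:ℂ)*Complex.I) * ω))‖
      ≤ ‖(Complex.I/2) * ((-(a:ℂ)*Complex.I)^i * Complex.exp ((-(a:ℂ)*Complex.I) * ω))‖
        + ‖(-(Complex.I/2)) * (((a:ℂ)*Complex.I)^i * Complex.exp (((a:ℂ)*Complex.I) * ω))‖ :=
      norm_add_le _ _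
    _ = 1/2 * (|a|^i * ‖Complex.exp ((-(a:ℂ)*Complex.I) * ω)‖)
        + 1/2 * (|a|^i * ‖Complex.exp (((a:ℂ)*Complex.I) * ω)‖) := by
      rw [norm_mul, norm_mul, norm_mul, norm_mul, norm_neg, hnI, hnorm1, hnorm2]
    _ ≤ 1/2 * (|a|^i * Real.exp (|a| * |ω.im|)) + 1/2 * (|a|^i * Real.exp (|a| * |ω.im|)) := by
      gcongr
    _ = |a| ^ i * Real.exp (|a| * |ω.im|) := by ring

lemma iter_inv_norm (m : ℕ) {ω : ℂ} (hω : ω ≠ 0) :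
    ‖iteratedDeriv m (fun w : ℂ => w⁻¹) ω‖ = m.factorial / ‖ω‖ ^ (m+1) := by
  have h : (fun w : ℂ => w⁻¹) = Inv.inv := rfl
  rw [iteratedDeriv_eq_iterate, h, iter_deriv_inv]
  rw [norm_mul, norm_mul, norm_pow, norm_neg, norm_one, one_pow, one_mul, Complex.norm_natCast, norm_zpow]
  have hprod : (∏ i ∈ Finset.range m, ‖(-1 - (i:ℂ))‖) = (m.factorial : ℝ) := by
    have h1 : ∀ i : ℕ, ‖(-1 - (i:ℂ))‖ = ((i + 1 : ℕ) : ℝ) := by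
      intro i
      have h2 : (-1 - (i:ℂ)) = -(((i:ℝ) + 1 : ℝ) : ℂ) := by push_cast; ring
      rw [h2, norm_neg, Complex.norm_real, Real.norm_eq_abs, abs_of_pos (by positivity)]
      push_cast; ring
    rw [Finset.prod_congr rfl fun i _ => h1 i, ← Nat.cast_prod,
      Finset.prod_range_add_one_eq_factorial]
  rw [show ((-1 : ℤ) - m) = -((m:ℤ)+1) by ring, zpow_neg]
  have hzp : ‖ω‖ ^ ((m:ℤ)+1) = ‖ω‖ ^ (m+1 : ℕ) := by
    rw [← zpow_natCast]
    push_cast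
    ring_nf
  rw [hzp, div_eq_mul_inv]

theorem stmt1 (n : ℕ) :
    ∃ C : ℝ, 0 < C ∧ ∀ (ω : ℂ), ω ≠ 0 → ∀ u v : ℝ, 0 < u → u ≤ v →
      ‖iteratedDeriv n (fun w : ℂ => ((u : ℂ) - (v : ℂ)) * sincC (w * ((u : ℂ) - (v : ℂ)))) ω‖
        ≤ C * v ^ (n + 1) / (1 + ‖ω‖ * v) * Real.exp (v * |ω.im| + u * ω.im) := by
  refine ⟨20 * (n+1).factorial * Real.exp 1, by positivity, ?_⟩
  intro ω hω u v hu huv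
  have hv : 0 < v := lt_of_lt_of_le hu huv
  set a : ℝ := u - v with ha
  have hc : ((u:ℂ) - (v:ℂ)) = ((a:ℝ):ℂ) := by push_cast [ha]; ring
  have hna : |a| = v - u := by rw [ha, abs_of_nonpos (by linarith)]; ring
  have hEexp : Real.exp ((v-u) * |ω.im|) ≤ Real.exp (v * |ω.im| + u * ω.im) := by
    apply Real.exp_le_exp.2
    have h1 : -(u * |ω.im|) ≤ u * ω.im := by
      have h2 := neg_abs_le ω.im
      nlinarith
    nlinarith [abs_nonneg ω.im]
  have hden : 0 < 1 + ‖ω‖ * v := by positivity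
  rw [div_mul_eq_mul_div, le_div_iff₀ hden]
  set E' : ℝ := Real.exp ((v-u) * |ω.im|) with hE'
  have hE'pos : 0 < E' := Real.exp_pos _
  rcases le_total (‖ω‖ * v) 1 with hsm | hlg
  · -- small frequency case : Cauchy estimates
    have hg : Differentiable ℂ (fun w : ℂ => ((u:ℂ)-(v:ℂ)) * sincC (w * ((u:ℂ)-(v:ℂ)))) :=
      (differentiable_const _).mul (differentiable_sincC.comp (differentiable_id.mul_const _))
    have hR : (0:ℝ) < 1/v := by positivity
    have hsphere : ∀ z ∈ Metric.sphere ω (1/v),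
        ‖(fun w : ℂ => ((u:ℂ)-(v:ℂ)) * sincC (w*((u:ℂ)-(v:ℂ)))) z‖
          ≤ 3 * v * (E' * Real.exp 1) := by
      intro z hz
      have hzdist : ‖z - ω‖ = 1/v := mem_sphere_iff_norm.1 hz
      have hzim : |z.im| ≤ |ω.im| + 1/v := by
        have h1 : |(z - ω).im| ≤ ‖z - ω‖ := by
          exact Complex.abs_im_le_norm _
        have h2 : z.im = ω.im + (z - ω).im := by simp
        rw [h2]
        calc |ω.im + (z-ω).im| ≤ |ω.im| + |(z-ω).im| := abs_add_le _ _
          _ ≤ |ω.im| + 1/v := by rw [← hzdist]; gcongr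
      have him : |(z * ((a:ℝ):ℂ)).im| ≤ (v-u) * |ω.im| + 1 := by
        have h3 : (z * ((a:ℝ):ℂ)).im = z.im * a := by
          simp [Complex.mul_im]
        rw [h3, abs_mul, hna]
        calc |z.im| * (v-u) ≤ (|ω.im| + 1/v) * (v-u) := by
              gcongr
          _ ≤ (v-u) * |ω.im| + 1 := by
            have h4 : (v-u)/v ≤ 1 := by
              rw [div_le_one hv]; linarith
            have h5 : (1/v) * (v-u) ≤ 1 := by
              have h6 : (1/v) * (v-u) = (v-u)/v := by ring
              rw [h6]; exact h4
            nlinarith [abs_nonneg ω.im]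
      simp only []
      rw [norm_mul, hc]
      have hnc : ‖((a:ℝ):ℂ)‖ = v - u := by
        rw [Complex.norm_real, Real.norm_eq_abs, hna]
      rw [hnc]
      calc (v-u) * ‖sincC (z * ((a:ℝ):ℂ))‖
          ≤ (v-u) * (3 * Real.exp |(z * ((a:ℝ):ℂ)).im|) := by
            gcongr
            exact norm_sincC_le _
        _ ≤ v * (3 * Real.exp ((v-u) * |ω.im| + 1)) := by
            have e1 : Real.exp |(z * ((a:ℝ):ℂ)).im| ≤ Real.exp ((v-u) * |ω.im| + 1) :=
              Real.exp_le_exp.2 him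
            apply mul_le_mul (by linarith) (by linarith) (by positivity) (by linarith)
        _ = 3 * v * (E' * Real.exp 1) := by
            rw [hE', ← Real.exp_add]
            ring
    have hCau := cauchy_est hg ω hR hsphere n
    have hpow : ((1:ℝ)/v) ^ n = 1 / v^n := by
      rw [one_div, inv_pow, one_div]
    rw [hpow] at hCau
    have hCau' : ‖iteratedDeriv n (fun w : ℂ => ((u:ℂ)-(v:ℂ)) * sincC (w*((u:ℂ)-(v:ℂ)))) ω‖
        ≤ 3 * n.factorial * v^(n+1) * E' * Real.exp 1 := by
      refine hCau.trans (le_of_eq ?_)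
      rw [div_div_eq_mul_div, div_one]
      ring
    calc ‖iteratedDeriv n (fun w : ℂ => ((u:ℂ)-(v:ℂ)) * sincC (w*((u:ℂ)-(v:ℂ)))) ω‖ * (1 + ‖ω‖*v)
        ≤ (3 * n.factorial * v^(n+1) * E' * Real.exp 1) * 2 := by
          have hn2 : 1 + ‖ω‖ * v ≤ 2 := by linarith
          exact mul_le_mul hCau' hn2 (by positivity) (by positivity)
      _ ≤ 20 * (n+1).factorial * Real.exp 1 * v^(n+1) * Real.exp (v * |ω.im| + u * ω.im) := by
          have hfle : (n.factorial : ℝ) ≤ ((n+1).factorial : ℝ) := by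
            exact_mod_cast Nat.factorial_le (Nat.le_succ n)
          calc (3 * n.factorial * v^(n+1) * E' * Real.exp 1) * 2
              = 6 * ((n.factorial:ℝ) * v^(n+1) * Real.exp 1 * E') := by ring
            _ ≤ 20 * (((n+1).factorial:ℝ) * v^(n+1) * Real.exp 1
                  * Real.exp (v * |ω.im| + u * ω.im)) := by
                gcongr <;> norm_num
            _ = 20 * (n+1).factorial * Real.exp 1 * v^(n+1)
                  * Real.exp (v * |ω.im| + u * ω.im) := by ring
  · -- large frequency case : Leibniz rule on sin(wa) * w⁻¹
    have hωpos : 0 < ‖ω‖ := norm_pos_iff.2 hω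
    set f1 : ℂ → ℂ := fun w => Complex.sin (w * ((a:ℝ):ℂ)) with hf1def
    set f2 : ℂ → ℂ := fun w : ℂ => w⁻¹ with hf2def
    set s : Set ℂ := {(0:ℂ)}ᶜ with hsdef
    have hs : IsOpen s := isOpen_compl_singleton
    have hωs : ω ∈ s := by simp [hsdef, hω]
    -- the function agrees with f1 * f2 near ω
    have hev : (fun w : ℂ => ((u:ℂ)-(v:ℂ)) * sincC (w * ((u:ℂ)-(v:ℂ))))
        =ᶠ[nhds ω] fun w => f1 w * f2 w := by
      filter_upwards [hs.eventually_mem hωs] with w hw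
      have hw0 : w ≠ 0 := by simpa [hsdef] using hw
      rw [hc]
      by_cases haz : (a:ℝ) = 0
      · simp [haz, hf1def, sincC]
      · have hwa : w * ((a:ℝ):ℂ) ≠ 0 :=
          mul_ne_zero hw0 (by exact_mod_cast haz)
        rw [show sincC (w * ((a:ℝ):ℂ)) = Complex.sin (w * ((a:ℝ):ℂ)) / (w * ((a:ℝ):ℂ))
          from if_neg hwa]
        simp only [hf1def, hf2def]
        field_simp
        exact mul_div_cancel_left₀ _ (by exact_mod_cast haz)
    rw [hev.iteratedDeriv_eq n]
    -- Leibniz bound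
    have hcd1 : ContDiffOn ℂ (n:ℕ∞) f1 s :=
      (Complex.contDiff_sin.comp (contDiff_id.mul contDiff_const)).contDiffOn
    have hcd2 : ContDiffOn ℂ (n:ℕ∞) f2 s := contDiffOn_inv ℂ
    have hmul := norm_iteratedFDerivWithin_mul_le hcd1 hcd2 hs.uniqueDiffOn hωs
      (le_refl ((n:ℕ∞) : WithTop ℕ∞))
    have heq : ‖iteratedDeriv n (fun w => f1 w * f2 w) ω‖
        = ‖iteratedFDerivWithin ℂ n (fun w => f1 w * f2 w) s ω‖ := by
      rw [← norm_iteratedFDeriv_eq_norm_iteratedDeriv,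
        iteratedFDerivWithin_of_isOpen n hs hωs]
    -- bound each factor
    have hterm : ∀ i ∈ Finset.range (n+1),
        (n.choose i : ℝ) * ‖iteratedFDerivWithin ℂ i f1 s ω‖
          * ‖iteratedFDerivWithin ℂ (n-i) f2 s ω‖
        ≤ (n.factorial : ℝ) * v^n * E' / ‖ω‖ := by
      intro i hi
      have hin : i ≤ n := Nat.lt_succ_iff.mp (Finset.mem_range.1 hi)
      have hF1 : ‖iteratedFDerivWithin ℂ i f1 s ω‖ ≤ v^i * E' := by
        rw [iteratedFDerivWithin_of_isOpen i hs hωs,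
          norm_iteratedFDeriv_eq_norm_iteratedDeriv]
        refine (iter_sin_bound a i ω).trans ?_
        have h1 : |a| ≤ v := by rw [hna]; linarith
        have h2 : |a|^i ≤ v^i := pow_le_pow_left₀ (abs_nonneg _) h1 i
        have h3 : Real.exp (|a| * |ω.im|) ≤ E' := by
          rw [hE']
          apply Real.exp_le_exp.2
          rw [hna]
        exact mul_le_mul h2 h3 (Real.exp_pos _).le (by positivity)
      have hF2 : ‖iteratedFDerivWithin ℂ (n-i) f2 s ω‖
          = ((n-i).factorial : ℝ) / ‖ω‖^(n-i+1) := by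
        rw [iteratedFDerivWithin_of_isOpen (n-i) hs hωs,
          norm_iteratedFDeriv_eq_norm_iteratedDeriv]
        exact iter_inv_norm (n-i) hω
      have hfact : (n.choose i : ℝ) * ((n-i).factorial : ℝ) ≤ (n.factorial : ℝ) := by
        have h4 := Nat.choose_mul_factorial_mul_factorial hin
        have h5 : n.choose i * (n-i).factorial ≤ n.factorial := by
          calc n.choose i * (n-i).factorial
              ≤ n.choose i * (n-i).factorial * i.factorial :=
                Nat.le_mul_of_pos_right _ (Nat.factorial_pos i)
            _ = n.choose i * i.factorial * (n-i).factorial := by ring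
            _ = n.factorial := h4
        exact_mod_cast h5
      have hvpow : v^i / ‖ω‖^(n-i+1) ≤ v^n / ‖ω‖ := by
        rw [div_le_div_iff₀ (by positivity) hωpos]
        have h6 : (1:ℝ) ≤ (‖ω‖ * v)^(n-i) := one_le_pow₀ hlg
        calc v^i * ‖ω‖ = v^i * ‖ω‖ * 1 := by ring
          _ ≤ v^i * ‖ω‖ * (‖ω‖ * v)^(n-i) := by
              apply mul_le_mul_of_nonneg_left h6 (by positivity)
          _ = (v^i * v^(n-i)) * (‖ω‖ * ‖ω‖^(n-i)) := by
              rw [mul_pow]; ring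
          _ = v^n * ‖ω‖^(n-i+1) := by
              rw [← pow_add, Nat.add_sub_cancel' hin, pow_succ]
              ring
      calc (n.choose i : ℝ) * ‖iteratedFDerivWithin ℂ i f1 s ω‖
            * ‖iteratedFDerivWithin ℂ (n-i) f2 s ω‖
          ≤ (n.choose i : ℝ) * (v^i * E') * (((n-i).factorial : ℝ) / ‖ω‖^(n-i+1)) := by
            rw [hF2]
            apply mul_le_mul_of_nonneg_right _ (by positivity)
            exact mul_le_mul_of_nonneg_left hF1 (by positivity)
        _ = ((n.choose i : ℝ) * ((n-i).factorial : ℝ)) * E' * (v^i / ‖ω‖^(n-i+1)) := by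
            ring
        _ ≤ (n.factorial : ℝ) * E' * (v^n / ‖ω‖) := by
            apply mul_le_mul (mul_le_mul_of_nonneg_right hfact hE'pos.le) hvpow
              (by positivity) (by positivity)
        _ = (n.factorial : ℝ) * v^n * E' / ‖ω‖ := by ring
    have hsum : ‖iteratedFDerivWithin ℂ n (fun w => f1 w * f2 w) s ω‖
        ≤ ((n+1).factorial : ℝ) * v^n * E' / ‖ω‖ := by
      refine hmul.trans ?_
      calc (∑ i ∈ Finset.range (n+1), (n.choose i : ℝ)
              * ‖iteratedFDerivWithin ℂ i f1 s ω‖ * ‖iteratedFDerivWithin ℂ (n-i) f2 s ω‖)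
          ≤ ∑ i ∈ Finset.range (n+1), (n.factorial : ℝ) * v^n * E' / ‖ω‖ :=
            Finset.sum_le_sum hterm
        _ = (n+1) * ((n.factorial : ℝ) * v^n * E' / ‖ω‖) := by
            rw [Finset.sum_const, Finset.card_range]
            simp [nsmul_eq_mul]
        _ = ((n+1).factorial : ℝ) * v^n * E' / ‖ω‖ := by
            rw [Nat.factorial_succ]
            push_cast
            ring
    calc ‖iteratedDeriv n (fun w => f1 w * f2 w) ω‖ * (1 + ‖ω‖ * v)
        ≤ (((n+1).factorial : ℝ) * v^n * E' / ‖ω‖) * (2 * (‖ω‖ * v)) := by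
          apply mul_le_mul (heq ▸ hsum) (by linarith) (by positivity) (by positivity)
      _ = 2 * ((n+1).factorial : ℝ) * v^(n+1) * E' * (‖ω‖ / ‖ω‖) := by
          rw [pow_succ]
          ring
      _ = 2 * ((n+1).factorial : ℝ) * v^(n+1) * E' := by
          rw [div_self hωpos.ne']
          ring
      _ ≤ 20 * (n+1).factorial * Real.exp 1 * v ^ (n + 1) * Real.exp (v * |ω.im| + u * ω.im) := by
          have h8 : (1:ℝ) ≤ Real.exp 1 := Real.one_le_exp zero_le_one
          calc 2 * ((n+1).factorial : ℝ) * v^(n+1) * E'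
              = 2 * (((n+1).factorial : ℝ) * 1 * v^(n+1) * E') := by ring
            _ ≤ 20 * (((n+1).factorial : ℝ) * Real.exp 1 * v^(n+1)
                  * Real.exp (v * |ω.im| + u * ω.im)) := by
                gcongr <;> norm_num
            _ = 20 * (n+1).factorial * Real.exp 1 * v ^ (n+1)
                  * Real.exp (v * |ω.im| + u * ω.im) := by ring
end

section
/- For every real ω and every u > 0, all Jost iterates φ⁽ᵏ⁾_ω(u) are well defined (all integrals converge absolutely) and satisfy |φ⁽ᵏ⁾_ω(u)| ≤ P_ω(u)^k / k!, where P_ω(u) = ∫_u^∞ (4v/(1+|ω|v))·V_0(v) dv < ∞; in particular the series Σ_{k=0}^∞ φ⁽ᵏ⁾_ω(u) converges absolutely. -/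
open Complex MeasureTheory

/-- The Jost iterates for the potential `V`, where the kernel `sin(ω(u−v))/ω` is
understood as the entire function `ω ↦ (u−v)·S(ω(u−v))`. -/
noncomputable def jostIter (V : ℝ → ℝ) : ℕ → ℝ → ℝ → ℂ
  | 0 => fun ω u => Complex.exp (-Complex.I * (ω : ℂ) * (u : ℂ))
  | k + 1 => fun ω u => -∫ v in Set.Ioi u,
      ((u : ℂ) - (v : ℂ)) * sincC ((ω : ℂ) * ((u : ℂ) - (v : ℂ))) *
        (V v : ℂ) * jostIter V k ω v

open Set Filter Topology

lemma sincC_norm_le_one (x : ℝ) : ‖sincC x‖ ≤ 1 := by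
  unfold sincC
  split_ifs with h
  · simp
  · have hx : x ≠ 0 := by exact_mod_cast fun h' => h (by rw [h']; simp)
    rw [← Complex.ofReal_sin, ← Complex.ofReal_div]
    rw [Complex.norm_real]
    rw [Real.norm_eq_abs, abs_div]
    exact div_le_one_of_le₀ (Real.abs_sin_le_abs) (abs_nonneg _)

lemma mul_sincC_norm_le_one (x : ℝ) : ‖(x:ℂ) * sincC x‖ ≤ 1 := by
  unfold sincC
  split_ifs with h
  · simp at h; simp [h]
  · have hx : (x:ℂ) ≠ 0 := h
    rw [mul_div_cancel₀ _ hx, ← Complex.ofReal_sin, Complex.norm_real]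
    exact abs_le.mpr ⟨Real.neg_one_le_sin x, Real.sin_le_one x⟩

lemma kernel_norm_le (ω x v : ℝ) (hx : 0 ≤ x) (hv : x < v) :
    ‖((x:ℂ) - v) * sincC ((ω:ℂ) * ((x:ℂ) - v))‖ ≤ 4 * v / (1 + |ω| * v) := by
  have hv0 : 0 < v := lt_of_le_of_lt hx hv
  have hcast : (ω:ℂ) * ((x:ℂ) - v) = ((ω * (x - v) : ℝ) : ℂ) := by push_cast; ring
  have hden : 0 < 1 + |ω| * v := by positivity
  rw [le_div_iff₀ hden]
  have hK1 : ‖((x:ℂ) - v) * sincC ((ω:ℂ) * ((x:ℂ) - v))‖ ≤ v := by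
    rw [norm_mul]
    calc ‖((x:ℂ) - v)‖ * ‖sincC ((ω:ℂ) * ((x:ℂ) - v))‖
        ≤ ‖((x:ℂ) - v)‖ * 1 := by
          refine mul_le_mul_of_nonneg_left ?_ (norm_nonneg _)
          rw [hcast]; exact sincC_norm_le_one _
      _ ≤ v := by
          rw [mul_one]
          have : ((x:ℂ) - v) = ((x - v : ℝ) : ℂ) := by push_cast; ring
          rw [this, Complex.norm_real, Real.norm_eq_abs, abs_sub_comm,
            _root_.abs_of_nonneg (by linarith : (0:ℝ) ≤ v - x)]
          linarith
  have hK2 : |ω| * ‖((x:ℂ) - v) * sincC ((ω:ℂ) * ((x:ℂ) - v))‖ ≤ 1 := by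
    have harg : ((x:ℂ) - v) = ((x - v : ℝ) : ℂ) := by push_cast; ring
    have : |ω| * ‖((x:ℂ) - v) * sincC ((ω:ℂ) * ((x:ℂ) - v))‖
        = ‖((ω * (x - v) : ℝ) : ℂ) * sincC ((ω * (x - v) : ℝ) : ℂ)‖ := by
      rw [harg, ← Complex.ofReal_mul]
      simp [norm_mul, Complex.norm_real, abs_mul, mul_assoc]
    rw [this]
    exact mul_sincC_norm_le_one _
  have hKnn : (0:ℝ) ≤ ‖((x:ℂ) - v) * sincC ((ω:ℂ) * ((x:ℂ) - v))‖ := norm_nonneg _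
  nlinarith [mul_le_mul_of_nonneg_right hK2 hv0.le]

lemma sincC_meas : Measurable sincC := by
  unfold sincC
  exact Measurable.ite (MeasurableSet.singleton 0 : MeasurableSet {x : ℂ | x = 0})
    measurable_const (Complex.measurable_sin.div measurable_id)

lemma jost_meas (V : ℝ → ℝ) (hVm : Measurable V) (ω : ℝ) :
    ∀ k : ℕ, StronglyMeasurable (fun v : ℝ => jostIter V k ω v) := by
  intro k
  induction k with
  | zero =>
    apply Continuous.stronglyMeasurable
    exact Complex.continuous_exp.comp (by continuity)
  | succ k ih =>
    have hF : Measurable (fun p : ℝ × ℝ =>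
        ({q : ℝ × ℝ | q.1 < q.2}).indicator (fun q : ℝ × ℝ =>
          ((q.1 : ℂ) - (q.2 : ℂ)) * sincC ((ω : ℂ) * ((q.1 : ℂ) - (q.2 : ℂ))) *
            (V q.2 : ℂ) * jostIter V k ω q.2) p) := by
      apply Measurable.indicator
      · apply Measurable.mul
        apply Measurable.mul
        apply Measurable.mul
        · exact (Complex.measurable_ofReal.comp measurable_fst).sub
            (Complex.measurable_ofReal.comp measurable_snd)
        · exact sincC_meas.comp (measurable_const.mul
            ((Complex.measurable_ofReal.comp measurable_fst).sub
              (Complex.measurable_ofReal.comp measurable_snd)))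
        · exact Complex.measurable_ofReal.comp (hVm.comp measurable_snd)
        · exact ih.measurable.comp measurable_snd
      · exact measurableSet_lt measurable_fst measurable_snd
    have hSM : StronglyMeasurable (fun u : ℝ => ∫ v : ℝ,
        ({q : ℝ × ℝ | q.1 < q.2}).indicator (fun q : ℝ × ℝ =>
          ((q.1 : ℂ) - (q.2 : ℂ)) * sincC ((ω : ℂ) * ((q.1 : ℂ) - (q.2 : ℂ))) *
            (V q.2 : ℂ) * jostIter V k ω q.2) (u, v)) :=
      hF.stronglyMeasurable.integral_prod_right'
    have heq : (fun v : ℝ => jostIter V (k+1) ω v) = fun u : ℝ => -∫ v : ℝ,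
        ({q : ℝ × ℝ | q.1 < q.2}).indicator (fun q : ℝ × ℝ =>
          ((q.1 : ℂ) - (q.2 : ℂ)) * sincC ((ω : ℂ) * ((q.1 : ℂ) - (q.2 : ℂ))) *
            (V q.2 : ℂ) * jostIter V k ω q.2) (u, v) := by
      funext u
      have hpt : ∀ v : ℝ, (Ioi u).indicator (fun v : ℝ =>
          ((u : ℂ) - (v : ℂ)) * sincC ((ω : ℂ) * ((u : ℂ) - (v : ℂ))) *
            (V v : ℂ) * jostIter V k ω v) v
          = ({q : ℝ × ℝ | q.1 < q.2}).indicator (fun q : ℝ × ℝ =>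
          ((q.1 : ℂ) - (q.2 : ℂ)) * sincC ((ω : ℂ) * ((q.1 : ℂ) - (q.2 : ℂ))) *
            (V q.2 : ℂ) * jostIter V k ω q.2) (u, v) := by
        intro v
        by_cases h : u < v
        · rw [Set.indicator_of_mem (by exact h : v ∈ Ioi u),
            Set.indicator_of_mem (by exact h)]
        · rw [Set.indicator_of_notMem (by exact h : v ∉ Ioi u),
            Set.indicator_of_notMem (by exact h)]
      show (-∫ v in Set.Ioi u, ((u : ℂ) - (v : ℂ)) * sincC ((ω : ℂ) * ((u : ℂ) - (v : ℂ))) *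
            (V v : ℂ) * jostIter V k ω v) = _
      rw [← integral_indicator (measurableSet_Ioi : MeasurableSet (Ioi u))]
      simp_rw [hpt]
    rw [heq]
    exact hSM.neg

section Pfacts

variable {g : ℝ → ℝ}
  (hgnn : ∀ v : ℝ, 0 < v → 0 ≤ g v)
  (hgint : ∀ a : ℝ, 0 < a → IntegrableOn g (Ioi a))
  (hgcont : ContinuousOn g (Ioi 0))

include hgnn hgint

lemma Pnn {x : ℝ} (hx : 0 < x) : 0 ≤ ∫ v in Ioi x, g v :=
  setIntegral_nonneg measurableSet_Ioi (fun v hv => hgnn v (lt_trans hx hv))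

lemma Panti {x y : ℝ} (hx : 0 < x) (hxy : x ≤ y) :
    (∫ v in Ioi y, g v) ≤ ∫ v in Ioi x, g v := by
  apply setIntegral_mono_set (hgint x hx)
  · filter_upwards [ae_restrict_mem measurableSet_Ioi] with v hv
    exact hgnn v (lt_trans hx hv)
  · exact HasSubset.Subset.eventuallyLE (Ioi_subset_Ioi hxy)

include hgcont

lemma Pderiv {x : ℝ} (hx : 0 < x) :
    HasDerivAt (fun y => ∫ v in Ioi y, g v) (-(g x)) x := by
  set a := x / 2 with ha
  have ha0 : 0 < a := by positivity
  have hax : a < x := by simp [ha]; linarith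
  have hid : ∀ y : ℝ, a < y → (∫ v in Ioi y, g v)
      = (∫ v in Ioi a, g v) - ∫ t in a..y, g t := by
    intro y hy
    rw [intervalIntegral.integral_of_le hy.le]
    have hsplit : (∫ v in Ioi a, g v) = (∫ v in Ioc a y, g v) + ∫ v in Ioi y, g v := by
      rw [← setIntegral_union (Ioc_disjoint_Ioi le_rfl) measurableSet_Ioi
        ((hgint a ha0).mono_set Ioc_subset_Ioi_self) (hgint y (lt_trans ha0 hy)),
        Ioc_union_Ioi_eq_Ioi hy.le]
    linarith
  have hD : HasDerivAt (fun y => (∫ v in Ioi a, g v) - ∫ t in a..y, g t) (-(g x)) x := by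
    apply HasDerivAt.const_sub
    apply intervalIntegral.integral_hasDerivAt_right
    · rw [intervalIntegrable_iff]
      apply (hgint a ha0).mono_set
      rw [uIoc_of_le hax.le]
      exact Ioc_subset_Ioi_self
    · exact ContinuousOn.stronglyMeasurableAtFilter isOpen_Ioi hgcont x hx
    · exact hgcont.continuousAt (Ioi_mem_nhds hx)
  apply hD.congr_of_eventuallyEq
  filter_upwards [Ioi_mem_nhds hax] with y hy
  exact hid y hy

end Pfacts

section Pfacts2
variable {g : ℝ → ℝ}
  (hgnn : ∀ v : ℝ, 0 < v → 0 ≤ g v)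
  (hgint : ∀ a : ℝ, 0 < a → IntegrableOn g (Ioi a))
  (hgcont : ContinuousOn g (Ioi 0))
include hgnn hgint hgcont

lemma Ptendsto : Tendsto (fun y => ∫ v in Ioi y, g v) atTop (𝓝 0) := by
  have h1 : Tendsto (fun y : ℝ => (∫ v in Ioi 1, g v) - ∫ t in (1:ℝ)..y, g t) atTop
      (𝓝 ((∫ v in Ioi 1, g v) - ∫ v in Ioi 1, g v)) :=
    tendsto_const_nhds.sub
      (intervalIntegral_tendsto_integral_Ioi 1 (hgint 1 one_pos) tendsto_id)
  rw [sub_self] at h1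
  apply h1.congr'
  filter_upwards [Ioi_mem_atTop (1:ℝ)] with y hy
  have hy1 : (1:ℝ) < y := hy
  rw [intervalIntegral.integral_of_le hy1.le]
  have hsplit : (∫ v in Ioi 1, g v) = (∫ v in Ioc 1 y, g v) + ∫ v in Ioi y, g v := by
    rw [← setIntegral_union (Ioc_disjoint_Ioi le_rfl) measurableSet_Ioi
      ((hgint 1 one_pos).mono_set Ioc_subset_Ioi_self) (hgint y (lt_trans one_pos hy1)),
      Ioc_union_Ioi_eq_Ioi hy1.le]
  linarith

lemma PcontOn : ∀ x, 0 < x → ContinuousAt (fun y => ∫ v in Ioi y, g v) x :=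
  fun x hx => (Pderiv hgnn hgint hgcont hx).continuousAt

lemma gPk_int (k : ℕ) {x : ℝ} (hx : 0 < x) :
    IntegrableOn (fun v => g v * (∫ w in Ioi v, g w) ^ k) (Ioi x) := by
  set P : ℝ → ℝ := fun y => ∫ v in Ioi y, g v with hP
  apply Integrable.mono ((hgint x hx).mul_const ((P x) ^ k))
  · apply AEStronglyMeasurable.mul
    · exact ((hgint x hx).aestronglyMeasurable)
    · apply AEStronglyMeasurable.pow
      apply ContinuousOn.aestronglyMeasurable _ measurableSet_Ioi
      exact fun y hy => ((PcontOn hgnn hgint hgcont y (lt_trans hx hy)).continuousWithinAt)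
  · filter_upwards [ae_restrict_mem measurableSet_Ioi] with v hv
    have hv0 : 0 < v := lt_trans hx hv
    have h1 : 0 ≤ P v := Pnn hgnn (by exact hgint) hv0
    have h2 : P v ≤ P x := Panti hgnn hgint hx hv.le
    have hgv : 0 ≤ g v := hgnn v hv0
    have hPx : 0 ≤ P x := Pnn hgnn hgint hx
    rw [Real.norm_eq_abs, Real.norm_eq_abs,
      _root_.abs_of_nonneg (mul_nonneg hgv (pow_nonneg h1 k)),
      _root_.abs_of_nonneg (mul_nonneg hgv (pow_nonneg hPx k))]
    exact mul_le_mul_of_nonneg_left (pow_le_pow_left₀ h1 h2 k) hgv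

lemma Pkey (k : ℕ) {x : ℝ} (hx : 0 < x) :
    (∫ v in Ioi x, g v * (∫ w in Ioi v, g w) ^ k)
      = (∫ w in Ioi x, g w) ^ (k+1) / (k+1) := by
  set P : ℝ → ℝ := fun y => ∫ v in Ioi y, g v with hP
  have key := integral_Ioi_of_hasDerivAt_of_tendsto
    (f := fun y => -(P y) ^ (k+1) / (k+1)) (f' := fun v => g v * (P v) ^ k)
    (a := x) (m := 0)
    (by
      apply ContinuousAt.continuousWithinAt
      have := PcontOn hgnn hgint hgcont x hx
      fun_prop (disch := norm_num))
    (by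
      intro y hy
      have hy0 : 0 < y := lt_trans hx hy
      have hD : HasDerivAt (fun y => (∫ v in Ioi y, g v) ^ (k+1))
          (↑(k + 1) * (∫ v in Ioi y, g v) ^ (k + 1 - 1) * -g y) y :=
        (Pderiv hgnn hgint hgcont hy0).pow (k+1)
      have : HasDerivAt (fun y => -(∫ v in Ioi y, g v) ^ (k+1) / ((k:ℝ)+1))
          (-(↑(k + 1) * (∫ v in Ioi y, g v) ^ (k + 1 - 1) * -g y) / ((k:ℝ) + 1)) y :=
        (hD.neg).div_const ((k:ℝ)+1)
      refine this.congr_deriv ?_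
      symm
      show g y * (∫ v in Ioi y, g v) ^ k = _
      push_cast
      rw [eq_div_iff (by positivity : ((k:ℝ)+1) ≠ 0)]
      ring)
    (gPk_int hgnn hgint hgcont k hx)
    (by
      have h0 := Ptendsto hgnn hgint hgcont
      have := ((h0.pow (k+1)).neg).div_const ((k:ℝ)+1)
      simpa using this)
  rw [key]
  push_cast
  field_simp
  simp [hP]

end Pfacts2

lemma gnn' {V : ℝ → ℝ} {ω : ℝ} (hVnn0 : ∀ v : ℝ, 0 < v → 0 ≤ V v) :
    ∀ v : ℝ, 0 < v → 0 ≤ 4 * v / (1 + |ω| * v) * V v := by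
  intro v hv
  have := hVnn0 v hv
  have h1 : 0 ≤ 4 * v / (1 + |ω| * v) := by positivity
  exact mul_nonneg h1 this

section JostBound
variable {V : ℝ → ℝ} {ω : ℝ}
  (hVm : Measurable V)
  (hVnn : ∀ v : ℝ, 0 < v → 0 ≤ V v)
  (hgint : ∀ a : ℝ, 0 < a → IntegrableOn (fun v => 4 * v / (1 + |ω| * v) * V v) (Ioi a))
  (hgcont : ContinuousOn (fun v => 4 * v / (1 + |ω| * v) * V v) (Ioi 0))

include hVm hVnn hgint hgcont

lemma jost_integrand_int (k : ℕ) {x : ℝ} (hx : 0 < x)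
    (hbd : ∀ y : ℝ, 0 < y → ‖jostIter V k ω y‖ ≤
      (∫ w in Ioi y, 4 * w / (1 + |ω| * w) * V w) ^ k / (k.factorial : ℝ)) :
    IntegrableOn (fun v : ℝ =>
      ((x : ℂ) - (v : ℂ)) * sincC ((ω : ℂ) * ((x : ℂ) - (v : ℂ))) *
        (V v : ℂ) * jostIter V k ω v) (Ioi x) := by
  set g : ℝ → ℝ := fun v => 4 * v / (1 + |ω| * v) * V v with hg
  set P : ℝ → ℝ := fun y => ∫ w in Ioi y, g w with hP
  have hgnn := gnn' (V := V) (ω := ω) hVnn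
  have hPx : 0 ≤ P x := Pnn hgnn hgint hx
  apply Integrable.mono ((hgint x hx).mul_const ((P x) ^ k / (k.factorial : ℝ)))
  · apply Measurable.aestronglyMeasurable
    apply Measurable.mul
    apply Measurable.mul
    apply Measurable.mul
    · exact (measurable_const.sub Complex.measurable_ofReal)
    · exact sincC_meas.comp (measurable_const.mul
        (measurable_const.sub Complex.measurable_ofReal))
    · exact Complex.measurable_ofReal.comp hVm
    · exact (jost_meas V hVm ω k).measurable
  · filter_upwards [ae_restrict_mem measurableSet_Ioi] with v hv
    have hv' : x < v := hv
    have hv0 : 0 < v := lt_trans hx hv'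
    have hA : ‖((x : ℂ) - v) * sincC ((ω : ℂ) * ((x : ℂ) - v))‖ ≤ 4 * v / (1 + |ω| * v) :=
      kernel_norm_le ω x v hx.le hv'
    have hC : ‖jostIter V k ω v‖ ≤ (P v) ^ k / (k.factorial : ℝ) := hbd v hv0
    have hPv : 0 ≤ P v := Pnn hgnn hgint hv0
    have hPvx : P v ≤ P x := Panti hgnn hgint hx hv'.le
    have hCc : (P v) ^ k / (k.factorial : ℝ) ≤ (P x) ^ k / (k.factorial : ℝ) := by
      gcongr
    rw [norm_mul, norm_mul, Complex.norm_real, Real.norm_eq_abs,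
      _root_.abs_of_nonneg (hVnn v hv0)]
    have hfnn : (0:ℝ) ≤ 4 * v / (1 + |ω| * v) := by positivity
    calc ‖((x : ℂ) - v) * sincC ((ω : ℂ) * ((x : ℂ) - v))‖ * V v * ‖jostIter V k ω v‖
        ≤ (4 * v / (1 + |ω| * v)) * V v * ((P x) ^ k / (k.factorial : ℝ)) := by
          apply mul_le_mul
          · exact mul_le_mul_of_nonneg_right hA (hVnn v hv0)
          · exact le_trans hC hCc
          · exact norm_nonneg _
          · exact mul_nonneg hfnn (hVnn v hv0)
      _ = ‖g v * ((P x) ^ k / (k.factorial : ℝ))‖ := by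
          rw [Real.norm_eq_abs, _root_.abs_of_nonneg (mul_nonneg (hgnn v hv0)
            (div_nonneg (pow_nonneg hPx k) (Nat.cast_nonneg _)))]

lemma jost_bound : ∀ k : ℕ, ∀ x : ℝ, 0 < x → ‖jostIter V k ω x‖ ≤
    (∫ w in Ioi x, 4 * w / (1 + |ω| * w) * V w) ^ k / (k.factorial : ℝ) := by
  intro k
  induction k with
  | zero =>
    intro x hx
    simp [jostIter, Complex.norm_exp]
  | succ k ih =>
    intro x hx
    set g : ℝ → ℝ := fun v => 4 * v / (1 + |ω| * v) * V v with hg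
    set P : ℝ → ℝ := fun y => ∫ w in Ioi y, g w with hP
    have hgnn := gnn' (V := V) (ω := ω) hVnn
    have hnorm : ‖jostIter V (k+1) ω x‖ = ‖∫ v in Ioi x,
        ((x : ℂ) - (v : ℂ)) * sincC ((ω : ℂ) * ((x : ℂ) - (v : ℂ))) *
          (V v : ℂ) * jostIter V k ω v‖ := by
      show ‖-∫ v in Ioi x, _‖ = _
      rw [norm_neg]
    rw [hnorm]
    have hdom : IntegrableOn (fun v => g v * (P v) ^ k / (k.factorial : ℝ)) (Ioi x) := by
      exact (gPk_int hgnn hgint hgcont k hx).div_const _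
    have hle : ‖∫ v in Ioi x,
        ((x : ℂ) - (v : ℂ)) * sincC ((ω : ℂ) * ((x : ℂ) - (v : ℂ))) *
          (V v : ℂ) * jostIter V k ω v‖ ≤
        ∫ v in Ioi x, g v * (P v) ^ k / (k.factorial : ℝ) := by
      apply norm_integral_le_of_norm_le hdom
      filter_upwards [ae_restrict_mem measurableSet_Ioi] with v hv
      have hv' : x < v := hv
      have hv0 : 0 < v := lt_trans hx hv'
      have hA : ‖((x : ℂ) - v) * sincC ((ω : ℂ) * ((x : ℂ) - v))‖ ≤ 4 * v / (1 + |ω| * v) :=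
        kernel_norm_le ω x v hx.le hv'
      have hC : ‖jostIter V k ω v‖ ≤ (P v) ^ k / (k.factorial : ℝ) := ih v hv0
      have hPv : 0 ≤ P v := Pnn hgnn hgint hv0
      have hfnn : (0:ℝ) ≤ 4 * v / (1 + |ω| * v) := by positivity
      rw [norm_mul, norm_mul, Complex.norm_real, Real.norm_eq_abs,
        _root_.abs_of_nonneg (hVnn v hv0)]
      calc ‖((x : ℂ) - v) * sincC ((ω : ℂ) * ((x : ℂ) - v))‖ * V v * ‖jostIter V k ω v‖
          ≤ (4 * v / (1 + |ω| * v)) * V v * ((P v) ^ k / (k.factorial : ℝ)) := by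
            apply mul_le_mul
            · exact mul_le_mul_of_nonneg_right hA (hVnn v hv0)
            · exact hC
            · exact norm_nonneg _
            · exact mul_nonneg hfnn (hVnn v hv0)
        _ = g v * (P v) ^ k / (k.factorial : ℝ) := by rw [hg]; ring
    refine le_trans hle ?_
    have : ∫ v in Ioi x, g v * (P v) ^ k / (k.factorial : ℝ)
        = (∫ v in Ioi x, g v * (P v) ^ k) / (k.factorial : ℝ) := integral_div _ _
    rw [this, Pkey hgnn hgint hgcont k hx]
    rw [Nat.factorial_succ]
    push_cast
    rw [div_div]

end JostBound

theorem stmt9 (M : ℝ) (hM : 0 < M) (r : ℝ → ℝ)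
    (hr : ∀ u : ℝ, 2 * M < r u ∧ r u + 2 * M * Real.log (r u / (2 * M) - 1) = u)
    (V₀ : ℝ → ℝ) (hV : ∀ u : ℝ, V₀ u = (1 - 2 * M / r u) * (2 * M / (r u) ^ 3))
    (ω : ℝ) (u : ℝ) (hu : 0 < u) :
    IntegrableOn (fun v : ℝ => 4 * v / (1 + |ω| * v) * V₀ v) (Set.Ioi u) ∧
    (∀ k : ℕ, IntegrableOn (fun v : ℝ =>
        ((u : ℂ) - (v : ℂ)) * sincC ((ω : ℂ) * ((u : ℂ) - (v : ℂ))) *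
          (V₀ v : ℂ) * jostIter V₀ k ω v) (Set.Ioi u)) ∧
    (∀ k : ℕ, ‖jostIter V₀ k ω u‖ ≤
        (∫ v in Set.Ioi u, 4 * v / (1 + |ω| * v) * V₀ v) ^ k / (k.factorial : ℝ)) ∧
    Summable (fun k : ℕ => ‖jostIter V₀ k ω u‖) := by
  have h2M : (0:ℝ) < 2 * M := by positivity
  have hr1 : ∀ x, 2 * M < r x := fun x => (hr x).1
  have hrpos : ∀ x, 0 < r x := fun x => lt_trans h2M (hr1 x)
  have hVnn : ∀ x, 0 ≤ V₀ x := by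
    intro x
    rw [hV]
    have h0 := hrpos x
    have h2 : 2 * M / r x < 1 := (div_lt_one h0).mpr (hr1 x)
    have h3 : 0 ≤ 2 * M / (r x) ^ 3 := div_nonneg (by linarith) (pow_nonneg h0.le 3)
    exact mul_nonneg (by linarith) h3
  have hrhalf : ∀ x, x < 2 * r x := by
    intro x
    have heq := (hr x).2
    have hpos : 0 < r x / (2 * M) - 1 := by
      rw [sub_pos]
      exact (one_lt_div h2M).mpr (hr1 x)
    have hlog : Real.log (r x / (2 * M) - 1) ≤ r x / (2 * M) - 1 - 1 :=
      Real.log_le_sub_one_of_pos hpos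
    have hmul := mul_le_mul_of_nonneg_left hlog h2M.le
    have hexp : 2 * M * (r x / (2 * M) - 1 - 1) = r x - 4 * M := by
      field_simp
      ring
    rw [hexp] at hmul
    linarith
  have hVle : ∀ x, 0 < x → V₀ x ≤ 16 * M / x ^ 3 := by
    intro x hx
    have h0 := hrpos x
    have hh := hrhalf x
    rw [hV]
    have f1 : 1 - 2 * M / r x ≤ 1 := by
      have : 0 < 2 * M / r x := by positivity
      linarith
    have h3 : 0 ≤ 2 * M / (r x) ^ 3 := div_nonneg (by linarith) (pow_nonneg h0.le 3)
    have step1 : (1 - 2 * M / r x) * (2 * M / (r x) ^ 3) ≤ 2 * M / (r x) ^ 3 := by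
      nlinarith
    have step2 : 2 * M / (r x) ^ 3 ≤ 2 * M / (x / 2) ^ 3 := by
      apply div_le_div_of_nonneg_left (by linarith) (by positivity)
      exact pow_le_pow_left₀ (by positivity) (by linarith) 3
    have step3 : 2 * M / (x / 2) ^ 3 = 16 * M / x ^ 3 := by
      field_simp
      ring
    linarith
  have F_mono : StrictMonoOn (fun s => s + 2 * M * Real.log (s / (2 * M) - 1))
      (Ioi (2 * M)) := by
    intro a ha b hb hab
    simp only
    have ha' : 0 < a / (2 * M) - 1 := by
      rw [sub_pos]; exact (one_lt_div h2M).mpr ha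
    have hlogle : Real.log (a / (2 * M) - 1) ≤ Real.log (b / (2 * M) - 1) := by
      apply Real.log_le_log ha'
      have : a / (2 * M) ≤ b / (2 * M) := (div_le_div_iff_of_pos_right h2M).mpr hab.le
      linarith
    have := mul_le_mul_of_nonneg_left hlogle h2M.le
    linarith
  have hFr : ∀ x, r x + 2 * M * Real.log (r x / (2 * M) - 1) = x := fun x => (hr x).2
  have hrmono : StrictMono r := by
    intro a b hab
    rcases lt_trichotomy (r a) (r b) with h | h | h
    · exact h
    · exfalso
      have : a = b := by rw [← hFr a, ← hFr b, h]
      linarith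
    · exfalso
      have := F_mono (Set.mem_Ioi.mpr (hr1 b)) (Set.mem_Ioi.mpr (hr1 a)) h
      simp only at this
      rw [hFr a, hFr b] at this
      linarith
  have hrsurj : ∀ y, 2 * M < y → ∃ x, r x = y := by
    intro y hy
    refine ⟨y + 2 * M * Real.log (y / (2 * M) - 1), ?_⟩
    set x := y + 2 * M * Real.log (y / (2 * M) - 1) with hx
    have h1 : r x + 2 * M * Real.log (r x / (2 * M) - 1) = x := hFr x
    have hinj := F_mono.injOn
    apply hinj (Set.mem_Ioi.mpr (hr1 x)) (Set.mem_Ioi.mpr hy)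
    simp only
    rw [h1]
  have hrcont : Continuous r := by
    rw [continuous_iff_continuousAt]
    intro a
    apply continuousAt_of_monotoneOn_of_exists_between
      (hrmono.monotone.monotoneOn Set.univ) univ_mem
    · intro b hb
      have hmax : max b (2 * M) < r a := max_lt hb (hr1 a)
      obtain ⟨t, ht1, ht2⟩ := exists_between hmax
      obtain ⟨c, hc⟩ := hrsurj t (lt_of_le_of_lt (le_max_right b (2 * M)) ht1)
      exact ⟨c, Set.mem_univ c, by
        rw [hc]; exact ⟨lt_of_le_of_lt (le_max_left b (2 * M)) ht1, ht2⟩⟩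
    · intro b hb
      obtain ⟨t, ht1, ht2⟩ := exists_between hb
      obtain ⟨c, hc⟩ := hrsurj t (lt_trans (hr1 a) ht1)
      exact ⟨c, Set.mem_univ c, by rw [hc]; exact ⟨ht1, ht2⟩⟩
  have hVcont : Continuous V₀ := by
    have hfe : V₀ = fun x => (1 - 2 * M / r x) * (2 * M / (r x) ^ 3) := funext hV
    rw [hfe]
    exact ((continuous_const.sub
        (continuous_const.div hrcont fun x => (hrpos x).ne')).mul
      (continuous_const.div (hrcont.pow 3) fun x => pow_ne_zero 3 (hrpos x).ne'))
  have hVm : Measurable V₀ := hVcont.measurable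
  have hVnn' : ∀ v : ℝ, 0 < v → 0 ≤ V₀ v := fun v _ => hVnn v
  have hgcont : ContinuousOn (fun v : ℝ => 4 * v / (1 + |ω| * v) * V₀ v) (Ioi 0) := by
    apply ContinuousOn.mul _ hVcont.continuousOn
    apply ContinuousOn.div (by fun_prop) (by fun_prop)
    intro v hv
    have hv0 : (0:ℝ) < v := hv
    have : 0 ≤ |ω| * v := mul_nonneg (abs_nonneg ω) hv0.le
    exact ne_of_gt (by linarith)
  have hgint : ∀ a : ℝ, 0 < a →
      IntegrableOn (fun v : ℝ => 4 * v / (1 + |ω| * v) * V₀ v) (Ioi a) := by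
    intro a ha
    have h1 : IntegrableOn (fun v : ℝ => v ^ (-2:ℝ)) (Ioi a) :=
      integrableOn_Ioi_rpow_of_lt (by norm_num) ha
    have h2 : IntegrableOn (fun v : ℝ => 64 * M * v ^ (-2:ℝ)) (Ioi a) :=
      h1.const_mul (64 * M)
    have hbig : IntegrableOn (fun v : ℝ => 64 * M / v ^ 2) (Ioi a) := by
      apply h2.congr_fun _ measurableSet_Ioi
      intro v hv
      have hv0 : 0 < v := lt_trans ha hv
      have hrw : v ^ (-2:ℝ) = (v ^ (2:ℕ))⁻¹ := by
        rw [← Real.rpow_natCast v 2, ← Real.rpow_neg hv0.le]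
        norm_num
      simp only [hrw]
      rw [div_eq_mul_inv]
    apply Integrable.mono hbig
    · exact ((hgcont.mono (Ioi_subset_Ioi ha.le)).aestronglyMeasurable measurableSet_Ioi)
    · filter_upwards [ae_restrict_mem measurableSet_Ioi] with v hv
      have hv0 : 0 < v := lt_trans ha hv
      have hgv : 0 ≤ 4 * v / (1 + |ω| * v) * V₀ v := gnn' hVnn' v hv0
      have hb1 : 4 * v / (1 + |ω| * v) ≤ 4 * v := by
        apply div_le_self (by linarith)
        have : 0 ≤ |ω| * v := mul_nonneg (abs_nonneg ω) hv0.le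
        linarith
      have hb2 : 4 * v / (1 + |ω| * v) * V₀ v ≤ 4 * v * V₀ v :=
        mul_le_mul_of_nonneg_right hb1 (hVnn v)
      have hb3 : 4 * v * V₀ v ≤ 4 * v * (16 * M / v ^ 3) :=
        mul_le_mul_of_nonneg_left (hVle v hv0) (by linarith)
      have hb4 : 4 * v * (16 * M / v ^ 3) = 64 * M / v ^ 2 := by
        field_simp
        ring
      rw [Real.norm_eq_abs, Real.norm_eq_abs, _root_.abs_of_nonneg hgv,
        _root_.abs_of_nonneg (by positivity : (0:ℝ) ≤ 64 * M / v ^ 2)]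
      linarith
  refine ⟨hgint u hu, ?_, ?_, ?_⟩
  · intro k
    exact jost_integrand_int hVm hVnn' hgint hgcont k hu
      (fun y hy => jost_bound hVm hVnn' hgint hgcont k y hy)
  · intro k
    exact jost_bound hVm hVnn' hgint hgcont k u hu
  · apply Summable.of_nonneg_of_le (fun k => norm_nonneg _)
      (fun k => jost_bound hVm hVnn' hgint hgcont k u hu)
    exact Real.summable_pow_div_factorial _
end

section
/- There exists a constant c > 0 such that for every real t ≥ 1: |∫_{−1}^{1} log|ω| · e^{−iωt} dω| ≤ c/t. -/
open MeasureTheory intervalIntegral Set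

lemma lem_log_int : IntervalIntegrable Real.log volume 0 1 := by
  rw [intervalIntegrable_iff_integrableOn_Ioc_of_le zero_le_one]
  have h : IntegrableOn (fun x : ℝ => -Real.log x) (Ioc 0 1) volume := by
    apply integrableOn_deriv_of_nonneg (g := fun x => x - x * Real.log x)
    · exact (continuous_id.sub Real.continuous_mul_log).continuousOn
    · intro x hx
      simpa [Pi.sub_def] using (hasDerivAt_id x).sub (Real.hasDerivAt_mul_log (ne_of_gt hx.1))
    · intro x hx
      simp [Real.log_nonpos hx.1.le hx.2.le]
  have h2 : IntegrableOn (fun x : ℝ => -(-Real.log x)) (Ioc 0 1) volume := h.neg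
  simpa using h2

lemma lem_sinc_int (t : ℝ) :
    IntervalIntegrable (fun ω : ℝ => Real.sin (ω * t) * ω⁻¹) volume 0 1 := by
  rw [intervalIntegrable_iff_integrableOn_Ioc_of_le zero_le_one]
  apply Measure.integrableOn_of_bounded (M := |t|) measure_Ioc_lt_top.ne
  · exact ((Real.measurable_sin.comp (measurable_id.mul_const t)).mul
      measurable_inv).aestronglyMeasurable
  · refine (ae_restrict_iff' measurableSet_Ioc).mpr (Filter.Eventually.of_forall ?_)
    intro x hx
    have hx0 : 0 < x := hx.1
    have h1 : |Real.sin (x * t)| ≤ |x * t| := Real.abs_sin_le_abs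
    rw [Real.norm_eq_abs, abs_mul, abs_inv]
    calc |Real.sin (x*t)| * |x|⁻¹ ≤ |x * t| * |x|⁻¹ := by
          gcongr
      _ = |t| := by rw [abs_mul]; field_simp

lemma lem_ftc1 (t : ℝ) (ht : 1 ≤ t) :
    ∫ ω in (0:ℝ)..1, (2 * Real.log ω * Real.cos (ω * t)) =
      -(2/t) * ∫ ω in (0:ℝ)..1, Real.sin (ω * t) * ω⁻¹ := by
  have ht0 : t ≠ 0 := by positivity
  set D1 : ℝ → ℝ := fun ω => (2/t*(t*Real.cos (ω*t))) * Real.log ω with hD1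
  set D2 : ℝ → ℝ := fun ω => (2/t) * (Real.sin (ω*t) * ω⁻¹) with hD2
  have hi1 : IntervalIntegrable D1 volume 0 1 :=
    lem_log_int.continuousOn_mul
      (by fun_prop : ContinuousOn (fun ω : ℝ => 2/t*(t*Real.cos (ω*t))) _)
  have hi2 : IntervalIntegrable D2 volume 0 1 := (lem_sinc_int t).const_mul _
  have hderiv : ∀ x ∈ Ioo (0:ℝ) 1,
      HasDerivAt (fun ω => 2/t * (Real.sin (ω*t) * Real.log ω)) (D1 x + D2 x) x := by
    intro x hx
    have hs : HasDerivAt (fun ω : ℝ => Real.sin (ω*t)) (Real.cos (x*t) * t) x := by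
      simpa [Function.comp_def] using (Real.hasDerivAt_sin (x*t)).comp x ((hasDerivAt_id x).mul_const t)
    have h := (hs.mul (Real.hasDerivAt_log (ne_of_gt hx.1))).const_mul (2/t)
    refine h.congr_deriv ?_
    simp only [hD1, hD2]
    ring
  have hcont : ContinuousOn (fun ω => 2/t * (Real.sin (ω*t) * Real.log ω)) (Icc 0 1) := by
    intro x hx
    by_cases hx0 : x = 0
    · subst hx0
      have hg : Filter.Tendsto (fun ω : ℝ => |t| * |ω * Real.log ω|)
          (nhdsWithin 0 (Icc 0 1)) (nhds 0) := by
        have := ((continuous_const.mul Real.continuous_mul_log.abs : Continuous fun ω : ℝ => |t| * |ω * Real.log ω|).tendsto 0).mono_left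
          (nhdsWithin_le_nhds (s := Icc (0:ℝ) 1))
        simpa [Pi.mul_def] using this
      have hsq : Filter.Tendsto (fun ω : ℝ => Real.sin (ω*t) * Real.log ω)
          (nhdsWithin 0 (Icc 0 1)) (nhds 0) := by
        apply squeeze_zero_norm _ hg
        intro ω
        rw [Real.norm_eq_abs, abs_mul]
        calc |Real.sin (ω*t)| * |Real.log ω| ≤ |ω*t| * |Real.log ω| := by
              exact mul_le_mul_of_nonneg_right Real.abs_sin_le_abs (abs_nonneg _)
          _ = |t| * |ω * Real.log ω| := by rw [abs_mul, abs_mul]; ring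
      have : Filter.Tendsto (fun ω : ℝ => 2/t * (Real.sin (ω*t) * Real.log ω))
          (nhdsWithin 0 (Icc 0 1)) (nhds (2/t * 0)) := hsq.const_mul _
      simpa [ContinuousWithinAt] using this
    · have : ContinuousAt (fun ω : ℝ => 2/t * (Real.sin (ω*t) * Real.log ω)) x :=
        continuousAt_const.mul
          (((Real.continuous_sin.comp (continuous_id.mul continuous_const :
              Continuous fun ω : ℝ => ω * t)).continuousAt).mul (Real.continuousAt_log hx0))
      exact this.continuousWithinAt
  have hftc := integral_eq_sub_of_hasDerivAt_of_le zero_le_one hcont hderiv (hi1.add hi2)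
  rw [intervalIntegral.integral_add hi1 hi2] at hftc
  simp only [Real.log_one, Real.log_zero, Real.sin_zero, zero_mul, mul_zero, one_mul] at hftc
  have h1 : ∫ ω in (0:ℝ)..1, D1 ω = ∫ ω in (0:ℝ)..1, (2 * Real.log ω * Real.cos (ω * t)) := by
    apply intervalIntegral.integral_congr
    intro ω _
    simp only [hD1]
    field_simp
  have h2 : ∫ ω in (0:ℝ)..1, D2 ω = (2/t) * ∫ ω in (0:ℝ)..1, Real.sin (ω * t) * ω⁻¹ :=
    intervalIntegral.integral_const_mul _ _
  rw [h1, h2] at hftc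
  linarith

lemma lem_S (t : ℝ) (ht : 1 ≤ t) :
    |∫ ω in (0:ℝ)..1, Real.sin (ω * t) * ω⁻¹| ≤ 4 := by
  have ht0 : (0:ℝ) < t := by linarith
  set a : ℝ := t⁻¹ with ha
  have ha0 : 0 < a := by positivity
  have ha1 : a ≤ 1 := by
    rw [ha]; exact inv_le_one_of_one_le₀ ht
  have hmem0 : (0:ℝ) ∈ uIcc (0:ℝ) 1 := by simp
  have hmema : a ∈ uIcc (0:ℝ) 1 := by
    rw [uIcc_of_le zero_le_one]; exact ⟨ha0.le, ha1⟩
  have hmem1 : (1:ℝ) ∈ uIcc (0:ℝ) 1 := by simp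
  have i1 : IntervalIntegrable (fun ω : ℝ => Real.sin (ω * t) * ω⁻¹) volume 0 a :=
    (lem_sinc_int t).mono_set (uIcc_subset_uIcc hmem0 hmema)
  have i2 : IntervalIntegrable (fun ω : ℝ => Real.sin (ω * t) * ω⁻¹) volume a 1 :=
    (lem_sinc_int t).mono_set (uIcc_subset_uIcc hmema hmem1)
  have hsplit := integral_add_adjacent_intervals i1 i2
  -- bound on [0, a]
  have b1 : |∫ ω in (0:ℝ)..a, Real.sin (ω * t) * ω⁻¹| ≤ 1 := by
    have := intervalIntegral.norm_integral_le_of_norm_le_const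
      (f := fun ω : ℝ => Real.sin (ω * t) * ω⁻¹) (a := 0) (b := a) (C := t) ?_
    · rw [Real.norm_eq_abs] at this
      calc |∫ ω in (0:ℝ)..a, Real.sin (ω * t) * ω⁻¹| ≤ t * |a - 0| := this
        _ = 1 := by rw [sub_zero, abs_of_pos ha0, ha, mul_inv_cancel₀ (ne_of_gt ht0)]
    · intro x hx
      rw [uIoc_of_le ha0.le] at hx
      have hx0 : 0 < x := hx.1
      rw [Real.norm_eq_abs, abs_mul, abs_inv]
      have h1 : |Real.sin (x * t)| ≤ |x * t| := Real.abs_sin_le_abs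
      calc |Real.sin (x * t)| * |x|⁻¹ ≤ |x * t| * |x|⁻¹ := by gcongr
        _ = |t| := by rw [abs_mul]; field_simp
        _ = t := abs_of_pos ht0
  -- FTC on [a, 1]
  set E : ℝ → ℝ := fun x => Real.sin (x*t) * x⁻¹ + Real.cos (x*t) * (t⁻¹ * (x^2)⁻¹) with hE
  have hpos : ∀ x ∈ uIcc a 1, x ≠ 0 := by
    intro x hx
    rw [uIcc_of_le ha1] at hx
    exact ne_of_gt (lt_of_lt_of_le ha0 hx.1)
  have hderiv : ∀ x ∈ uIcc a 1,
      HasDerivAt (fun ω => -Real.cos (ω*t) * (t⁻¹ * ω⁻¹)) (E x) x := by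
    intro x hx
    have hx0 : x ≠ 0 := hpos x hx
    have hc : HasDerivAt (fun ω : ℝ => -Real.cos (ω*t)) (Real.sin (x*t) * t) x := by
      have := ((Real.hasDerivAt_cos (x*t)).comp x
        ((hasDerivAt_id x).mul_const t)).neg
      simpa [Function.comp_def, Pi.neg_def] using this
    have hv : HasDerivAt (fun ω : ℝ => t⁻¹ * ω⁻¹) (t⁻¹ * -(x^2)⁻¹) x :=
      (hasDerivAt_inv hx0).const_mul t⁻¹
    have h := hc.mul hv
    refine h.congr_deriv ?_
    simp only [hE]
    field_simp
  have hEcont : ContinuousOn E (uIcc a 1) := by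
    apply ContinuousOn.add
    · exact ((Real.continuous_sin.comp (continuous_id.mul continuous_const :
        Continuous fun ω : ℝ => ω * t)).continuousOn).mul
        (continuousOn_id.inv₀ hpos)
    · exact ((Real.continuous_cos.comp (continuous_id.mul continuous_const :
        Continuous fun ω : ℝ => ω * t)).continuousOn).mul
        (continuousOn_const.mul (((continuousOn_id.pow 2)).inv₀
          (fun x hx => pow_ne_zero 2 (hpos x hx))))
  have iE : IntervalIntegrable E volume a 1 := hEcont.intervalIntegrable
  have hftc := integral_eq_sub_of_hasDerivAt hderiv iE
  -- second summand integrable on [a,1]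
  have icc : IntervalIntegrable (fun x : ℝ => Real.cos (x*t) * (t⁻¹ * (x^2)⁻¹)) volume a 1 := by
    apply ContinuousOn.intervalIntegrable
    exact ((Real.continuous_cos.comp (continuous_id.mul continuous_const :
        Continuous fun ω : ℝ => ω * t)).continuousOn).mul
        (continuousOn_const.mul (((continuousOn_id.pow 2)).inv₀
          (fun x hx => pow_ne_zero 2 (hpos x hx))))
  have hEsplit : ∫ x in a..1, E x = (∫ x in a..1, Real.sin (x*t) * x⁻¹)
      + ∫ x in a..1, Real.cos (x*t) * (t⁻¹ * (x^2)⁻¹) :=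
    intervalIntegral.integral_add i2 icc
  -- bound the (x^2)⁻¹ integral
  have hinv : ∫ x in a..1, t⁻¹ * (x^2)⁻¹ = t⁻¹ * (t - 1) := by
    rw [intervalIntegral.integral_const_mul]
    have hftc2 := integral_eq_sub_of_hasDerivAt
      (f := fun x : ℝ => -x⁻¹) (f' := fun x : ℝ => (x^2)⁻¹) (a := a) (b := 1) ?_ ?_
    · rw [hftc2, ha]; field_simp; ring
    · intro x hx
      simpa [Pi.neg_def] using (hasDerivAt_inv (hpos x hx)).neg
    · apply ContinuousOn.intervalIntegrable
      exact (continuousOn_id.pow 2).inv₀ (fun x hx => pow_ne_zero 2 (hpos x hx))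
  have b2c : |∫ x in a..1, Real.cos (x*t) * (t⁻¹ * (x^2)⁻¹)| ≤ 1 := by
    have hle := intervalIntegral.norm_integral_le_of_norm_le
      (f := fun x : ℝ => Real.cos (x*t) * (t⁻¹ * (x^2)⁻¹))
      (g := fun x : ℝ => t⁻¹ * (x^2)⁻¹) (a := a) (b := 1) (μ := volume) ha1 ?_ ?_
    · rw [Real.norm_eq_abs] at hle
      have hval : ∫ x in a..1, t⁻¹ * (x^2)⁻¹ = t⁻¹ * (t - 1) := hinv
      have : t⁻¹ * (t - 1) ≤ 1 := by
        have : t⁻¹ * (t - 1) = 1 - t⁻¹ := by field_simp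
        rw [this]
        have : 0 < t⁻¹ := by positivity
        linarith
      calc |∫ x in a..1, Real.cos (x*t) * (t⁻¹ * (x^2)⁻¹)|
            ≤ |∫ x in a..1, t⁻¹ * (x^2)⁻¹| := hle.trans (le_abs_self _)
        _ = t⁻¹ * (t - 1) := by
              rw [hval, abs_of_nonneg]
              have h3 : 0 ≤ t - 1 := by linarith
              positivity
        _ ≤ 1 := this
    · refine Filter.Eventually.of_forall fun x _ => ?_
      rw [Real.norm_eq_abs, abs_mul]
      have h2 : 0 ≤ t⁻¹ * (x^2)⁻¹ := by positivity
      calc |Real.cos (x*t)| * |t⁻¹ * (x^2)⁻¹| ≤ 1 * |t⁻¹ * (x^2)⁻¹| := by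
            gcongr; exact Real.abs_cos_le_one _
        _ = t⁻¹ * (x^2)⁻¹ := by rw [one_mul, abs_of_nonneg h2]
    · apply ContinuousOn.intervalIntegrable
      exact continuousOn_const.mul (((continuousOn_id.pow 2)).inv₀
        (fun x hx => pow_ne_zero 2 (hpos x hx)))
  -- endpoint values
  have hG1 : |(-Real.cos (1*t) * (t⁻¹ * 1⁻¹))| ≤ 1 := by
    rw [abs_mul, abs_neg]
    have h1 : |Real.cos (1*t)| ≤ 1 := Real.abs_cos_le_one _
    have h2 : |t⁻¹ * 1⁻¹| ≤ 1 := by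
      rw [inv_one, mul_one, abs_inv, abs_of_pos ht0]
      exact inv_le_one_of_one_le₀ ht
    calc |Real.cos (1*t)| * |t⁻¹ * 1⁻¹| ≤ 1 * 1 := by gcongr
      _ = 1 := one_mul 1
  have hGa : |(-Real.cos (a*t) * (t⁻¹ * a⁻¹))| ≤ 1 := by
    rw [abs_mul, abs_neg]
    have h2 : t⁻¹ * a⁻¹ = 1 := by rw [ha]; field_simp
    rw [h2, abs_one, mul_one]
    exact Real.abs_cos_le_one _
  have b2 : |∫ x in a..1, Real.sin (x*t) * x⁻¹| ≤ 3 := by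
    have heq : ∫ x in a..1, Real.sin (x*t) * x⁻¹
        = (-Real.cos (1*t) * (t⁻¹ * 1⁻¹)) - (-Real.cos (a*t) * (t⁻¹ * a⁻¹))
          - ∫ x in a..1, Real.cos (x*t) * (t⁻¹ * (x^2)⁻¹) := by
      rw [← hftc] at *
      linarith [hEsplit, hftc]
    rw [heq]
    calc |(-Real.cos (1*t) * (t⁻¹ * 1⁻¹)) - (-Real.cos (a*t) * (t⁻¹ * a⁻¹))
          - ∫ x in a..1, Real.cos (x*t) * (t⁻¹ * (x^2)⁻¹)|
        ≤ |(-Real.cos (1*t) * (t⁻¹ * 1⁻¹)) - (-Real.cos (a*t) * (t⁻¹ * a⁻¹))|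
          + |∫ x in a..1, Real.cos (x*t) * (t⁻¹ * (x^2)⁻¹)| := abs_sub _ _
      _ ≤ (|(-Real.cos (1*t) * (t⁻¹ * 1⁻¹))| + |(-Real.cos (a*t) * (t⁻¹ * a⁻¹))|)
          + |∫ x in a..1, Real.cos (x*t) * (t⁻¹ * (x^2)⁻¹)| := by
            gcongr; exact abs_sub _ _
      _ ≤ (1 + 1) + 1 := by gcongr
      _ = 3 := by norm_num
  calc |∫ ω in (0:ℝ)..1, Real.sin (ω * t) * ω⁻¹|
      = |(∫ ω in (0:ℝ)..a, Real.sin (ω * t) * ω⁻¹) + ∫ ω in a..1, Real.sin (ω * t) * ω⁻¹| := by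
        rw [hsplit]
    _ ≤ |∫ ω in (0:ℝ)..a, Real.sin (ω * t) * ω⁻¹| + |∫ ω in a..1, Real.sin (ω * t) * ω⁻¹| :=
        abs_add_le _ _
    _ ≤ 1 + 3 := by gcongr
    _ = 4 := by norm_num

open Complex

theorem stmt19 :
    ∃ c : ℝ, 0 < c ∧ ∀ t : ℝ, 1 ≤ t →
      ‖∫ ω in (-1 : ℝ)..1, ((Real.log |ω| : ℝ) : ℂ) *
          Complex.exp (-Complex.I * (ω : ℂ) * (t : ℂ))‖ ≤ c / t := by
  refine ⟨8, by norm_num, fun t ht => ?_⟩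
  have ht0 : (0:ℝ) < t := by linarith
  set f : ℝ → ℂ := fun ω => ((Real.log ω : ℝ) : ℂ) * Complex.exp (-Complex.I * ω * t) with hf
  set g : ℝ → ℂ := fun ω => ((Real.log ω : ℝ) : ℂ) * Complex.exp (Complex.I * ω * t) with hg
  -- rewrite |ω|
  have hcongr : (∫ ω in (-1 : ℝ)..1, ((Real.log |ω| : ℝ) : ℂ) *
      Complex.exp (-Complex.I * ω * t)) = ∫ ω in (-1:ℝ)..1, f ω := by
    apply intervalIntegral.integral_congr
    intro ω _
    simp [hf, Real.log_abs]
  -- integrability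
  have hlogC : IntervalIntegrable (fun ω : ℝ => ((Real.log ω : ℝ) : ℂ)) volume 0 1 := by
    have h := lem_log_int
    rw [intervalIntegrable_iff] at h ⊢
    exact h.ofReal
  have hexp : Continuous (fun ω : ℝ => Complex.exp (-Complex.I * ω * t)) := by fun_prop
  have hexp' : Continuous (fun ω : ℝ => Complex.exp (Complex.I * ω * t)) := by fun_prop
  have if1 : IntervalIntegrable f volume 0 1 := hlogC.mul_continuousOn hexp.continuousOn
  have ig1 : IntervalIntegrable g volume 0 1 := hlogC.mul_continuousOn hexp'.continuousOn
  have hlogC' : IntervalIntegrable (fun ω : ℝ => ((Real.log ω : ℝ) : ℂ)) volume (-1) 0 := by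
    have h := (IntervalIntegrable.iff_comp_neg (by simp)).mp hlogC
    simp only [neg_zero] at h
    have heq : (fun x : ℝ => ((Real.log (-x) : ℝ) : ℂ)) =
        fun x : ℝ => ((Real.log x : ℝ) : ℂ) := by
      funext x; rw [Real.log_neg_eq_log]
    rw [heq] at h
    exact h.symm
  have if0 : IntervalIntegrable f volume (-1) 0 := hlogC'.mul_continuousOn hexp.continuousOn
  -- split and reflect
  have hsplit : (∫ ω in (-1:ℝ)..1, f ω) = (∫ ω in (-1:ℝ)..0, f ω) + ∫ ω in (0:ℝ)..1, f ω :=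
    (integral_add_adjacent_intervals if0 if1).symm
  have hrefl : (∫ ω in (-1:ℝ)..0, f ω) = ∫ ω in (0:ℝ)..1, g ω := by
    have h := intervalIntegral.integral_comp_neg (a := (0:ℝ)) (b := 1) f
    simp only [neg_zero, neg_one_mul] at h
    rw [show (-(1:ℝ)) = -1 by norm_num] at h
    rw [← h]
    apply intervalIntegral.integral_congr
    intro x _
    simp only [hf, hg]
    rw [Real.log_neg_eq_log]
    congr 1
    push_cast
    ring_nf
  -- combine
  have hcomb : (∫ ω in (0:ℝ)..1, g ω) + (∫ ω in (0:ℝ)..1, f ω)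
      = ∫ ω in (0:ℝ)..1, (((2 * Real.log ω * Real.cos (ω * t) : ℝ)) : ℂ) := by
    rw [← intervalIntegral.integral_add ig1 if1]
    apply intervalIntegral.integral_congr
    intro x _
    simp only [hf, hg]
    have hcos : Complex.exp ((x*t : ℝ) * Complex.I) + Complex.exp (-(x*t : ℝ) * Complex.I)
        = 2 * Complex.cos ((x*t : ℝ)) := by
      rw [Complex.cos]; ring
    have h1 : Complex.I * (x:ℂ) * (t:ℂ) = ((x*t : ℝ) : ℂ) * Complex.I := by push_cast; ring
    have h2 : -Complex.I * (x:ℂ) * (t:ℂ) = -((x*t : ℝ) : ℂ) * Complex.I := by push_cast; ring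
    rw [h1, h2, ← mul_add, hcos]
    push_cast [Complex.ofReal_cos]
    ring
  have hofReal : (∫ ω in (0:ℝ)..1, (((2 * Real.log ω * Real.cos (ω * t) : ℝ)) : ℂ))
      = (((∫ ω in (0:ℝ)..1, 2 * Real.log ω * Real.cos (ω * t)) : ℝ) : ℂ) :=
    intervalIntegral.integral_ofReal
  rw [hcongr, hsplit, hrefl, hcomb, hofReal, Complex.norm_real, lem_ftc1 t ht]
  have hS := lem_S t ht
  rw [Real.norm_eq_abs, abs_mul, abs_neg, abs_of_pos (by positivity : (0:ℝ) < 2/t)]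
  calc 2/t * |∫ ω in (0:ℝ)..1, Real.sin (ω * t) * ω⁻¹| ≤ 2/t * 4 := by
        gcongr
    _ = 8 / t := by ring
end
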